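/- arXiv:2309.03143 — 7 statements merged into one kernel-verified Lean document; each statement's English description precedes it below -/
import Mathlib

section
/- Let n be a positive integer, z_1, ..., z_n formal variables (elements of a field of rational functions), and τ any function of z_1. Then the sum over all cyclic permutations σ of {1,...,n} (permutations with a single cycle of length n) of the product 1/(z_{σ(1)} - τ(z_1)) · ∏_{i=2}^n 1/(z_i - z_{σ(i)}) equals (z_1 - τ(z_1))^{n-2} / ∏_{i=2}^n [(z_1 - z_i)(τ(z_1) - z_i)]. -/
open Finset Polynomial

namespace CyclicSum

variable {K : Type*} [Field K] [DecidableEq K]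

/-- chain a t [w1,...,wm] = (t-w1)⁻¹ (w1-w2)⁻¹ ⋯ (wm - a)⁻¹ -/
def chain (a : K) : K → List K → K
  | t, [] => (t - a)⁻¹
  | t, x :: l => (t - x)⁻¹ * chain a x l

noncomputable def permsF : ℕ → Finset K → Finset (List K)
  | 0, _ => {[]}
  | m + 1, S => S.biUnion fun x => (permsF m (S.erase x)).image (x :: ·)

noncomputable def psum (a : K) : ℕ → Finset K → K → K
  | 0, _, t => (t - a)⁻¹
  | m + 1, S, t => ∑ x ∈ S, (t - x)⁻¹ * psum a m (S.erase x) x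

lemma lagrange_key (S : Finset K) (hS : S.Nonempty) (a t : K) :
    (t - a) ^ (S.card - 1) =
      ∑ x ∈ S, (x - a) ^ (S.card - 1) * ∏ w ∈ S.erase x, ((x - w)⁻¹ * (t - w)) := by
  classical
  have hdeg : ((X - C a) ^ (S.card - 1) : K[X]).degree < S.card := by
    rw [degree_pow, degree_X_sub_C]
    simp only [nsmul_eq_mul, mul_one]
    exact_mod_cast Nat.sub_lt_of_pos_le Nat.one_pos (Finset.card_pos.mpr hS) |>.trans_le le_rfl
  have h := Lagrange.eq_interpolate (v := (id : K → K)) (Set.injOn_id _) hdeg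
  have h2 := congrArg (Polynomial.eval t) h
  rw [Lagrange.interpolate_apply] at h2
  simp only [eval_pow, eval_sub, eval_X, eval_C, Polynomial.eval_finset_sum, eval_mul,
    Lagrange.basis, Polynomial.eval_prod, Lagrange.basisDivisor, id] at h2
  exact h2

end CyclicSum

namespace CyclicSum
variable {K : Type*} [Field K] [DecidableEq K]

lemma mem_permsF : ∀ (m : ℕ) (S : Finset K), S.card = m → ∀ l : List K,
    (l ∈ permsF m S ↔ l.Nodup ∧ l.toFinset = S)
  | 0, S, hS, l => by
    have hS0 : S = ∅ := Finset.card_eq_zero.mp hS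
    subst hS0
    simp only [permsF, Finset.mem_singleton]
    constructor
    · rintro rfl; simp
    · rintro ⟨hnd, hfin⟩
      cases l with
      | nil => rfl
      | cons x l => simp at hfin
  | m + 1, S, hS, l => by
    simp only [permsF, Finset.mem_biUnion, Finset.mem_image]
    constructor
    · rintro ⟨x, hx, l', hl', rfl⟩
      have hcard : (S.erase x).card = m := by
        rw [Finset.card_erase_of_mem hx, hS]; omega
      obtain ⟨hnd, hfin⟩ := (mem_permsF m _ hcard l').mp hl'
      have hxl' : x ∉ l' := by
        intro hmem
        have : x ∈ S.erase x := hfin ▸ List.mem_toFinset.mpr hmem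
        simp at this
      refine ⟨List.nodup_cons.mpr ⟨hxl', hnd⟩, ?_⟩
      rw [List.toFinset_cons, hfin, Finset.insert_erase hx]
    · rintro ⟨hnd, hfin⟩
      cases l with
      | nil => exfalso; rw [← hfin] at hS; simp at hS
      | cons x l' =>
        obtain ⟨hxl', hnd'⟩ := List.nodup_cons.mp hnd
        have hx : x ∈ S := by rw [← hfin]; simp
        have hcard : (S.erase x).card = m := by
          rw [Finset.card_erase_of_mem hx, hS]; omega
        refine ⟨x, hx, l', ?_, rfl⟩
        rw [mem_permsF m _ hcard l']
        refine ⟨hnd', ?_⟩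
        rw [← hfin, List.toFinset_cons, Finset.erase_insert]
        simpa using hxl'

lemma psum_eq_sum_chain (a : K) : ∀ (m : ℕ) (S : Finset K), S.card = m → ∀ t,
    psum a m S t = ∑ l ∈ permsF m S, chain a t l
  | 0, S, hS, t => by simp [psum, permsF, chain]
  | m + 1, S, hS, t => by
    rw [psum, permsF, Finset.sum_biUnion]
    · refine Finset.sum_congr rfl fun x hx => ?_
      rw [Finset.sum_image (by intro a _ b _ h; exact (List.cons.injEq _ _ _ _).mp h |>.2)]
      have hcard : (S.erase x).card = m := by rw [Finset.card_erase_of_mem hx, hS]; omega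
      rw [psum_eq_sum_chain a m _ hcard, Finset.mul_sum]
      exact Finset.sum_congr rfl fun l _ => rfl
    · intro x hx y hy hxy
      simp only [Finset.disjoint_left, Finset.mem_image]
      rintro l ⟨l₁, _, rfl⟩ ⟨l₂, _, h⟩
      exact hxy ((List.cons.injEq _ _ _ _).mp h).1.symm

lemma psum_formula (a : K) : ∀ (m : ℕ) (S : Finset K), S.card = m →
    (∀ w ∈ S, w ≠ a) → ∀ t, (∀ w ∈ S, t ≠ w) →
    psum a m S t = (t - a) ^ ((m : ℤ) - 1) / ∏ w ∈ S, ((w - a) * (t - w))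
  | 0, S, hS, ha, t, ht => by
    have hS0 : S = ∅ := Finset.card_eq_zero.mp hS
    subst hS0
    simp [psum, zpow_neg, zpow_one]
  | m + 1, S, hS, ha, t, ht => by
    have key : ∀ x ∈ S, (t - x)⁻¹ * psum a m (S.erase x) x
        = ((x - a) ^ m * ∏ w ∈ S.erase x, ((x - w)⁻¹ * (t - w))) /
            ∏ w ∈ S, ((w - a) * (t - w)) := by
      intro x hx
      have hcard : (S.erase x).card = m := by rw [Finset.card_erase_of_mem hx, hS]; omega
      rw [psum_formula a m _ hcard (fun w hw => ha w (Finset.mem_of_mem_erase hw))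
        x (fun w hw => fun h => (Finset.mem_erase.mp hw).1 (by rw [h]))]
      have hxa : x - a ≠ 0 := sub_ne_zero_of_ne (ha x hx)
      have htx : t - x ≠ 0 := sub_ne_zero_of_ne (ht x hx)
      have hA : (∏ w ∈ S.erase x, (w - a)) ≠ 0 :=
        Finset.prod_ne_zero_iff.mpr fun w hw =>
          sub_ne_zero_of_ne (ha w (Finset.mem_of_mem_erase hw))
      have hB : (∏ w ∈ S.erase x, (x - w)) ≠ 0 :=
        Finset.prod_ne_zero_iff.mpr fun w hw =>
          sub_ne_zero_of_ne (fun h => (Finset.mem_erase.mp hw).1 (by rw [h]))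
      have hC : (∏ w ∈ S.erase x, (t - w)) ≠ 0 :=
        Finset.prod_ne_zero_iff.mpr fun w hw =>
          sub_ne_zero_of_ne (ht w (Finset.mem_of_mem_erase hw))
      rw [← Finset.mul_prod_erase _ _ hx]
      rw [Finset.prod_mul_distrib, Finset.prod_mul_distrib, Finset.prod_mul_distrib]
      rw [Finset.prod_inv_distrib]
      have hzp : (x - a) ^ ((m : ℤ) - 1) = (x - a) ^ m * (x - a)⁻¹ := by
        rw [zpow_sub_one₀ hxa, zpow_natCast]
      rw [hzp]
      field_simp
    rw [psum, Finset.sum_congr rfl key, ← Finset.sum_div]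
    have hcard1 : S.card - 1 = m := by rw [hS]; omega
    have hne : S.Nonempty := Finset.card_pos.mp (by rw [hS]; exact Nat.succ_pos m)
    rw [← hcard1, ← lagrange_key S hne a t, hcard1]
    norm_num [zpow_natCast]

end CyclicSum

namespace CyclicSum

variable {n : ℕ}

lemma no_small_period (σ : Equiv.Perm (Fin n)) (Hσ : ∀ i j : Fin n, ∃ k : ℕ, (σ ^ k) i = j)
    (x : Fin n) (d : ℕ) (hd0 : 0 < d) (hdn : d < n) (hfix : (σ ^ d) x = x) : False := by
  have hmul : ∀ q, (σ ^ (d * q)) x = x := by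
    intro q
    induction q with
    | zero => simp
    | succ q ih =>
      have : d * (q + 1) = d * q + d := by ring
      rw [this, pow_add, Equiv.Perm.mul_apply, hfix, ih]
  have hmod : ∀ k, (σ ^ k) x = (σ ^ (k % d)) x := by
    intro k
    conv_lhs => rw [← Nat.mod_add_div k d, pow_add, Equiv.Perm.mul_apply, hmul]
  have hinj : Function.Injective
      (fun i : Fin n => (⟨(Classical.choose (Hσ x i)) % d, Nat.mod_lt _ hd0⟩ : Fin d)) := by
    intro i j h
    have hi := Classical.choose_spec (Hσ x i)
    have hj := Classical.choose_spec (Hσ x j)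
    have hval : (Classical.choose (Hσ x i)) % d = (Classical.choose (Hσ x j)) % d :=
      congrArg Fin.val h
    rw [← hi, ← hj, hmod, hmod (Classical.choose (Hσ x j)), hval]
  have hcard := Fintype.card_le_of_injective _ hinj
  simp only [Fintype.card_fin] at hcard
  omega

lemma walk_inj (σ : Equiv.Perm (Fin n)) (Hσ : ∀ i j : Fin n, ∃ k : ℕ, (σ ^ k) i = j)
    (x : Fin n) : ∀ k₁ k₂, k₁ < n → k₂ < n → (σ ^ k₁) x = (σ ^ k₂) x → k₁ = k₂ := by
  have main : ∀ k₁ k₂, k₁ ≤ k₂ → k₂ < n → (σ ^ k₁) x = (σ ^ k₂) x → k₁ = k₂ := by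
    intro k₁ k₂ hle hlt heq
    by_contra hne
    have hd0 : 0 < k₂ - k₁ := by omega
    refine no_small_period σ Hσ ((σ ^ k₁) x) (k₂ - k₁) hd0 (by omega) ?_
    rw [← Equiv.Perm.mul_apply, ← pow_add]
    rw [show k₂ - k₁ + k₁ = k₂ from by omega, heq]
  intro k₁ k₂ h₁ h₂ heq
  rcases le_or_gt k₁ k₂ with h | h
  · exact main k₁ k₂ h h₂ heq
  · exact (main k₂ k₁ h.le h₁ heq.symm).symm

lemma walk_surj (σ : Equiv.Perm (Fin n)) (Hσ : ∀ i j : Fin n, ∃ k : ℕ, (σ ^ k) i = j)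
    (hn : 1 ≤ n) (x : Fin n) : ∀ j, ∃ k, k < n ∧ (σ ^ k) x = j := by
  have hinj : Function.Injective (fun k : Fin n => (σ ^ (k : ℕ)) x) := by
    intro k₁ k₂ h
    exact Fin.ext (walk_inj σ Hσ x _ _ k₁.isLt k₂.isLt h)
  have hsurj := Finite.surjective_of_injective hinj
  intro j
  obtain ⟨k, hk⟩ := hsurj j
  exact ⟨(k : ℕ), k.isLt, hk⟩

lemma pow_card_fix (σ : Equiv.Perm (Fin n)) (Hσ : ∀ i j : Fin n, ∃ k : ℕ, (σ ^ k) i = j)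
    (hn : 1 ≤ n) (x : Fin n) : (σ ^ n) x = x := by
  obtain ⟨k, hk, heq⟩ := walk_surj σ Hσ hn x ((σ ^ n) x)
  rcases Nat.eq_zero_or_pos k with rfl | hk0
  · simpa using heq.symm
  · exfalso
    have hsplit : (σ ^ n) x = (σ ^ k) ((σ ^ (n - k)) x) := by
      rw [← Equiv.Perm.mul_apply, ← pow_add, show k + (n - k) = n from by omega]
    rw [hsplit] at heq
    have hx : (σ ^ (n - k)) x = x := (σ ^ k).injective heq.symm
    have := walk_inj σ Hσ x (n - k) 0 (by omega) (by omega) (by simpa using hx)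
    omega

end CyclicSum

namespace CyclicSum
variable {K : Type*} [Field K]

@[simp] lemma chain_nil (a t : K) : chain a t [] = (t - a)⁻¹ := rfl
@[simp] lemma chain_cons (a t x : K) (l : List K) :
    chain a t (x :: l) = (t - x)⁻¹ * chain a x l := rfl

lemma chain_eq_prod : ∀ (m : ℕ) (v : ℕ → K),
    chain (v (m + 1)) (v 0) ((List.range m).map fun k => v (k + 1)) =
      ∏ k ∈ Finset.range (m + 1), (v k - v (k + 1))⁻¹
  | 0, v => by simp [chain]
  | m + 1, v => by
    rw [List.range_succ_eq_map, List.map_cons, List.map_map]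
    simp only [Function.comp_def, Nat.succ_eq_add_one, chain_cons, zero_add]
    have h := chain_eq_prod m (fun k => v (k + 1))
    simp only [zero_add] at h
    rw [h, Finset.prod_range_succ' (fun k => (v k - v (k + 1))⁻¹) (m + 1)]
    ring

end CyclicSum

open scoped Classical in
/-- Cyclic-sum lemma (Lemma A.1): for a field `K`, variables `z₁,…,zₙ` and any function `τ`,
the sum over all cyclic permutations `σ` (single cycle of length `n`) of
`1/(z_{σ(1)} - τ(z₁)) · ∏_{i=2}^n 1/(z_i - z_{σ(i)})` equals
`(z₁ - τ(z₁))^{n-2} / ∏_{i=2}^n (z₁ - z_i)(τ(z₁) - z_i)`. -/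
theorem cyclic_sum_lemma {K : Type*} [Field K] (n : ℕ) (hn : 1 ≤ n)
    (z : Fin n → K) (τ : K → K)
    (hz : Function.Injective z)
    (hτ : ∀ i : Fin n, z i ≠ τ (z ⟨0, hn⟩)) :
    ∑ σ ∈ Finset.univ.filter
        (fun σ : Equiv.Perm (Fin n) => ∀ i j : Fin n, ∃ k : ℕ, (σ ^ k) i = j),
      (z (σ ⟨0, hn⟩) - τ (z ⟨0, hn⟩))⁻¹ *
        ∏ i ∈ Finset.univ.erase ⟨0, hn⟩, (z i - z (σ i))⁻¹
    = (z ⟨0, hn⟩ - τ (z ⟨0, hn⟩)) ^ ((n : ℤ) - 2) /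
        ∏ i ∈ Finset.univ.erase ⟨0, hn⟩,
          ((z ⟨0, hn⟩ - z i) * (τ (z ⟨0, hn⟩) - z i)) := by
  classical
  obtain ⟨m, rfl⟩ : ∃ m, n = m + 1 := ⟨n - 1, by omega⟩
  set i0 : Fin (m + 1) := ⟨0, hn⟩ with hi0
  set t : K := τ (z i0) with htdef
  set a : K := z i0 with hadef
  set S : Finset K := (Finset.univ.erase i0).image z with hSdef
  have hta : t ≠ a := fun h => hτ i0 h.symm
  have hScard : S.card = m := by
    rw [hSdef, Finset.card_image_of_injective _ hz,
      Finset.card_erase_of_mem (Finset.mem_univ _), Finset.card_univ, Fintype.card_fin]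
    omega
  have hwalk_ne : ∀ (σ : Equiv.Perm (Fin (m + 1))), (∀ i j, ∃ k : ℕ, (σ ^ k) i = j) →
      ∀ k, 0 < k → k < m + 1 → (σ ^ k) i0 ≠ i0 := by
    intro σ Hσ k hk0 hkn h
    have := CyclicSum.walk_inj σ Hσ i0 k 0 hkn (by omega) (by simpa using h)
    omega
  have key : (∑ σ ∈ Finset.univ.filter
        (fun σ : Equiv.Perm (Fin (m + 1)) => ∀ i j, ∃ k : ℕ, (σ ^ k) i = j),
      (z (σ i0) - t)⁻¹ * ∏ i ∈ Finset.univ.erase i0, (z i - z (σ i))⁻¹)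
      = ∑ l ∈ CyclicSum.permsF m S, -CyclicSum.chain a t l := by
    refine Finset.sum_bij (fun σ _ => (List.range m).map fun k => z ((σ ^ (k + 1)) i0))
      ?_ ?_ ?_ ?_
    · -- membership
      intro σ hσ
      have Hσ := (Finset.mem_filter.mp hσ).2
      rw [CyclicSum.mem_permsF m S hScard]
      constructor
      · refine List.Nodup.map_on ?_ List.nodup_range
        intro k₁ h₁ k₂ h₂ hzz
        rw [List.mem_range] at h₁ h₂
        have := CyclicSum.walk_inj σ Hσ i0 (k₁ + 1) (k₂ + 1) (by omega) (by omega) (hz hzz)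
        omega
      · ext w
        simp only [List.mem_toFinset, List.mem_map, List.mem_range, hSdef,
          Finset.mem_image, Finset.mem_erase, Finset.mem_univ, and_true]
        constructor
        · rintro ⟨k, hk, rfl⟩
          exact ⟨(σ ^ (k + 1)) i0, hwalk_ne σ Hσ (k + 1) (by omega) (by omega), rfl⟩
        · rintro ⟨i, hi, rfl⟩
          obtain ⟨k, hk, hk2⟩ := CyclicSum.walk_surj σ Hσ hn i0 i
          have hk0 : k ≠ 0 := by
            rintro rfl
            simp only [pow_zero, Equiv.Perm.coe_one, id_eq] at hk2
            exact hi hk2.symm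
          exact ⟨k - 1, by omega, by rw [show k - 1 + 1 = k from by omega, hk2]⟩
    · -- injectivity
      intro σ₁ h₁ σ₂ h₂ hl
      have H₁ := (Finset.mem_filter.mp h₁).2
      have H₂ := (Finset.mem_filter.mp h₂).2
      have hw : ∀ k, k < m + 1 → (σ₁ ^ k) i0 = (σ₂ ^ k) i0 := by
        intro k hk
        match k with
        | 0 => rfl
        | j + 1 =>
          have hj : j < m := by omega
          have hg := congrArg (fun l : List K => l[j]?) hl
          simp only [List.getElem?_map, List.getElem?_range, hj, if_pos] at hg
          exact hz (Option.some.inj hg)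
      apply Equiv.ext
      intro i
      obtain ⟨k, hk, hk2⟩ := CyclicSum.walk_surj σ₁ H₁ hn i0 i
      have hk2' : (σ₂ ^ k) i0 = i := by rw [← hw k hk]; exact hk2
      have e1 : σ₁ i = (σ₁ ^ (k + 1)) i0 := by
        rw [pow_succ', Equiv.Perm.mul_apply, hk2]
      have e2 : σ₂ i = (σ₂ ^ (k + 1)) i0 := by
        rw [pow_succ', Equiv.Perm.mul_apply, hk2']
      by_cases hlt : k + 1 < m + 1
      · rw [e1, e2, hw (k + 1) hlt]
      · have heq : k + 1 = m + 1 := by omega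
        rw [e1, e2, heq, CyclicSum.pow_card_fix σ₁ H₁ hn i0,
          CyclicSum.pow_card_fix σ₂ H₂ hn i0]
    · -- surjectivity
      intro l hl
      obtain ⟨hnd, hfin⟩ := (CyclicSum.mem_permsF m S hScard l).mp hl
      have hlen : l.length = m := by
        rw [← List.toFinset_card_of_nodup hnd, hfin, hScard]
      set L : List (Fin (m + 1)) := l.map (Function.invFun z) with hL
      have hmapz : L.map z = l := by
        rw [hL, List.map_map]
        conv_rhs => rw [← List.map_id l]
        apply List.map_congr_left
        intro w hw
        have hwS : w ∈ S := hfin ▸ List.mem_toFinset.mpr hw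
        rw [hSdef] at hwS
        obtain ⟨i, _, rfl⟩ := Finset.mem_image.mp hwS
        simp only [Function.comp_apply, id_eq]
        rw [Function.leftInverse_invFun hz i]
      have hLnd : L.Nodup := List.Nodup.of_map z (by rw [hmapz]; exact hnd)
      have hLlen : L.length = m := by rw [hL, List.length_map, hlen]
      have hLmem : ∀ i, i ∈ L ↔ i ≠ i0 := by
        intro i
        constructor
        · intro hiL
          have h1 : z i ∈ l := by rw [← hmapz]; exact List.mem_map_of_mem (f := z) hiL
          have h2 : z i ∈ S := hfin ▸ List.mem_toFinset.mpr h1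
          rw [hSdef] at h2
          obtain ⟨j, hj, hj2⟩ := Finset.mem_image.mp h2
          have := hz hj2
          subst this
          exact (Finset.mem_erase.mp hj).1
        · intro hi
          have h2 : z i ∈ S := by
            rw [hSdef]
            exact Finset.mem_image.mpr ⟨i, Finset.mem_erase.mpr ⟨hi, Finset.mem_univ _⟩, rfl⟩
          have h1 : z i ∈ l := List.mem_toFinset.mp (hfin ▸ h2)
          rw [← hmapz] at h1
          obtain ⟨j, hjL, hj2⟩ := List.mem_map.mp h1
          rwa [← hz hj2]
      have h0L : i0 ∉ L := fun h => ((hLmem i0).mp h) rfl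
      have hMnd : (i0 :: L).Nodup := List.nodup_cons.mpr ⟨h0L, hLnd⟩
      have hMlen : (i0 :: L).length = m + 1 := by simp [hLlen]
      set σ : Equiv.Perm (Fin (m + 1)) := (i0 :: L).formPerm with hσdef
      have hpow : ∀ k : ℕ, (σ ^ k) i0 =
          (i0 :: L)[k % (m + 1)]'(by rw [hMlen]; exact Nat.mod_lt _ hn) := by
        intro k
        have h := List.formPerm_pow_apply_head i0 L hMnd k
        rw [hσdef]
        simpa only [hMlen] using h
      have hσn : (σ ^ (m + 1)) i0 = i0 := by
        have := hpow (m + 1)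
        simpa using this
      have hmem : ∀ i : Fin (m + 1), ∃ k, k < m + 1 ∧ (σ ^ k) i0 = i := by
        intro i
        by_cases hi : i = i0
        · exact ⟨0, Nat.succ_pos _, by simpa using hi.symm⟩
        · obtain ⟨j, hjlen, hjget⟩ := List.mem_iff_getElem.mp ((hLmem i).mpr hi)
          refine ⟨j + 1, by omega, ?_⟩
          rw [hpow (j + 1)]
          have hjm : (j + 1) % (m + 1) = j + 1 := Nat.mod_eq_of_lt (by omega)
          simp only [hjm, List.getElem_cons_succ]
          exact hjget
      have Hσ : ∀ i j, ∃ k : ℕ, (σ ^ k) i = j := by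
        intro i j
        obtain ⟨ki, hki, hi⟩ := hmem i
        obtain ⟨kj, hkj, hj⟩ := hmem j
        refine ⟨kj + (m + 1 - ki), ?_⟩
        rw [← hi, ← Equiv.Perm.mul_apply, ← pow_add,
          show kj + (m + 1 - ki) + ki = kj + (m + 1) from by omega,
          pow_add, Equiv.Perm.mul_apply, hσn, hj]
      refine ⟨σ, Finset.mem_filter.mpr ⟨Finset.mem_univ _, Hσ⟩, ?_⟩
      apply List.ext_getElem
      · simp [hlen]
      · intro k h1 h2
        simp only [List.getElem_map, List.getElem_range]
        have hkm : k < m := by simpa using h1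
        rw [hpow (k + 1)]
        have hkmod : (k + 1) % (m + 1) = k + 1 := Nat.mod_eq_of_lt (by omega)
        simp only [hkmod, List.getElem_cons_succ]
        have : z (L[k]'(by omega)) = (L.map z)[k]'(by simpa [hLlen] using hkm) :=
          (List.getElem_map z).symm
        rw [this]
        simp only [hmapz]
    · -- values
      intro σ hσ
      have Hσ := (Finset.mem_filter.mp hσ).2
      set v : ℕ → K := fun k => if k = 0 then t else z ((σ ^ k) i0) with hvdef
      have hchain : CyclicSum.chain a t ((List.range m).map fun k => z ((σ ^ (k + 1)) i0))
          = ∏ k ∈ Finset.range (m + 1), (v k - v (k + 1))⁻¹ := by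
        have h := CyclicSum.chain_eq_prod m v
        have hvm : v (m + 1) = a := by
          rw [hvdef]
          simp only [Nat.succ_ne_zero, if_false]
          rw [CyclicSum.pow_card_fix σ Hσ hn i0, hadef]
        have hv0 : v 0 = t := by rw [hvdef]; simp
        have hlist : ((List.range m).map fun k => v (k + 1))
            = (List.range m).map fun k => z ((σ ^ (k + 1)) i0) := by
          apply List.map_congr_left
          intro k _
          rw [hvdef]
          simp
        rw [hvm, hv0, hlist] at h
        exact h
      have hprod : (∏ i ∈ Finset.univ.erase i0, (z i - z (σ i))⁻¹)
          = ∏ k ∈ Finset.range m, (v (k + 1) - v (k + 2))⁻¹ := by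
        refine (Finset.prod_bij (fun k _ => (σ ^ (k + 1)) i0) ?_ ?_ ?_ ?_).symm
        · intro k hk
          rw [Finset.mem_range] at hk
          exact Finset.mem_erase.mpr
            ⟨hwalk_ne σ Hσ (k + 1) (by omega) (by omega), Finset.mem_univ _⟩
        · intro k₁ hk₁ k₂ hk₂ hkk
          rw [Finset.mem_range] at hk₁ hk₂
          have := CyclicSum.walk_inj σ Hσ i0 (k₁ + 1) (k₂ + 1) (by omega) (by omega) hkk
          omega
        · intro i hi
          obtain ⟨k, hk, hk2⟩ := CyclicSum.walk_surj σ Hσ hn i0 i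
          have hk0 : k ≠ 0 := by
            rintro rfl
            exact (Finset.mem_erase.mp hi).1 (by simpa using hk2.symm)
          refine ⟨k - 1, Finset.mem_range.mpr (by omega), ?_⟩
          show (σ ^ (k - 1 + 1)) i0 = i
          rw [show k - 1 + 1 = k from by omega]; exact hk2
        · intro k hk
          rw [hvdef]
          simp only [Nat.succ_ne_zero, if_false, Nat.add_eq_zero, and_false]
          congr 2
          rw [pow_succ', Equiv.Perm.mul_apply]
      rw [hchain, Finset.prod_range_succ' (fun k => (v k - v (k + 1))⁻¹) m]
      have hv0 : v 0 = t := by rw [hvdef]; simp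
      have hv1 : v 1 = z (σ i0) := by rw [hvdef]; simp
      rw [hprod, hv0, hv1]
      have : (z (σ i0) - t)⁻¹ = -(t - z (σ i0))⁻¹ := by
        rw [← inv_neg, neg_sub]
      rw [this]
      ring
  rw [key, Finset.sum_neg_distrib, CyclicSum.psum_eq_sum_chain a m S hScard t |>.symm,
    CyclicSum.psum_formula a m S hScard
      (by rintro w hw; rw [hSdef] at hw
          obtain ⟨i, hi, rfl⟩ := Finset.mem_image.mp hw
          exact fun h => (Finset.mem_erase.mp hi).1 (hz h))
      t
      (by rintro w hw; rw [hSdef] at hw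
          obtain ⟨i, hi, rfl⟩ := Finset.mem_image.mp hw
          exact fun h => hτ i h.symm)]
  rw [hSdef, Finset.prod_image (fun x _ y _ h => hz h)]
  have hQne : (∏ i ∈ Finset.univ.erase i0, ((a - z i) * (t - z i))) ≠ 0 := by
    refine Finset.prod_ne_zero_iff.mpr fun i hi => ?_
    have hi' := (Finset.mem_erase.mp hi).1
    exact mul_ne_zero (sub_ne_zero_of_ne fun h => hi' (hz h).symm)
      (sub_ne_zero_of_ne fun h => hτ i h.symm)
  have hcard_erase : (Finset.univ.erase i0).card = m := by
    rw [Finset.card_erase_of_mem (Finset.mem_univ _), Finset.card_univ, Fintype.card_fin]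
    omega
  have hprodsign : (∏ i ∈ Finset.univ.erase i0, ((z i - a) * (t - z i)))
      = (-1) ^ m * ∏ i ∈ Finset.univ.erase i0, ((a - z i) * (t - z i)) := by
    calc ∏ i ∈ Finset.univ.erase i0, ((z i - a) * (t - z i))
        = ∏ i ∈ Finset.univ.erase i0, ((-1) * ((a - z i) * (t - z i))) :=
          Finset.prod_congr rfl fun i _ => by ring
      _ = (∏ _i ∈ Finset.univ.erase i0, (-1 : K)) *
            ∏ i ∈ Finset.univ.erase i0, ((a - z i) * (t - z i)) := Finset.prod_mul_distrib
      _ = _ := by rw [Finset.prod_const, hcard_erase]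
  rw [hprodsign]
  have hexp : ((m : ℕ) : ℤ) - 1 = ((m + 1 : ℕ) : ℤ) - 2 := by push_cast; ring
  rw [← hexp]
  have hneg : a - t = -1 * (t - a) := by ring
  rw [hneg, mul_zpow]
  have h1 : ((-1 : K)) ^ ((m : ℤ) - 1) = (-1) ^ m * (-1) := by
    rw [zpow_sub₀ (by norm_num : (-1 : K) ≠ 0), zpow_natCast, zpow_one]
    field_simp
  rw [h1]
  have hX0 : (t - a) ^ ((m : ℤ) - 1) ≠ 0 := zpow_ne_zero _ (sub_ne_zero_of_ne hta)
  have hc2 : ((-1 : K)) ^ m * (-1) ^ m = 1 := by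
    rw [← pow_add, ← two_mul, pow_mul, neg_one_sq, one_pow]
  field_simp
  linear_combination hc2
end

section
/- For any positive integer n, formal variables x_1,...,x_n, and any nonnegative integer D, the identity ∑_{i=1}^n x_i^{-D-1} / ∏_{j ≠ i} (x_i - x_j) = (-1)^{n-1} / (x_1 ⋯ x_n) · h_D(x_1^{-1}, ..., x_n^{-1}) holds, where h_D denotes the complete homogeneous symmetric polynomial of degree D. -/
open Finset

section Aux
open Polynomial
variable {K : Type*} [Field K] {ι : Type*} [DecidableEq ι]

lemma coeff_basis_top {s : Finset ι} {v : ι → K} (hvs : Set.InjOn v s) {i : ι} (hi : i ∈ s) :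
    (Lagrange.basis s v i).coeff (s.card - 1) = (∏ j ∈ s.erase i, (v i - v j))⁻¹ := by
  have h1 : (Lagrange.basis s v i).natDegree = s.card - 1 := Lagrange.natDegree_basis hvs hi
  rw [← h1, Polynomial.coeff_natDegree]
  unfold Lagrange.basis
  rw [Polynomial.leadingCoeff_prod, ← Finset.prod_inv_distrib]
  refine Finset.prod_congr rfl fun j hj => ?_
  obtain ⟨hij, hjs⟩ := Finset.mem_erase.mp hj
  have hne : v i ≠ v j := fun h => hij (hvs hjs hi h.symm)
  rw [Lagrange.basisDivisor, Polynomial.leadingCoeff_mul, Polynomial.leadingCoeff_C,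
    (Polynomial.monic_X_sub_C (v j)).leadingCoeff, mul_one]

lemma coeff_interpolate_top {s : Finset ι} {v : ι → K} (hvs : Set.InjOn v s) (r : ι → K) :
    (Lagrange.interpolate s v r).coeff (s.card - 1)
      = ∑ i ∈ s, r i / ∏ j ∈ s.erase i, (v i - v j) := by
  rw [Lagrange.interpolate_apply, Polynomial.finset_sum_coeff]
  refine Finset.sum_congr rfl fun i hi => ?_
  rw [Polynomial.coeff_C_mul, coeff_basis_top hvs hi, div_eq_mul_inv]

lemma L_low {s : Finset ι} {v : ι → K} (hvs : Set.InjOn v s) {m : ℕ} (hm : m < s.card) :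
    ∑ i ∈ s, v i ^ m / ∏ j ∈ s.erase i, (v i - v j)
      = if s.card - 1 = m then 1 else 0 := by
  have hdeg : ((X : K[X]) ^ m).degree < s.card := by
    rw [Polynomial.degree_X_pow]; exact_mod_cast hm
  have h := Lagrange.eq_interpolate hvs hdeg
  have h2 : (Lagrange.interpolate s v fun i => ((X : K[X]) ^ m).eval (v i)).coeff (s.card - 1)
      = ((X : K[X]) ^ m).coeff (s.card - 1) := by rw [← h]
  rw [coeff_interpolate_top hvs] at h2
  simp only [Polynomial.eval_pow, Polynomial.eval_X] at h2
  rw [h2, Polynomial.coeff_X_pow]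

/-- complete homogeneous sum -/
noncomputable def hsum (v : ι → K) (s : Finset ι) (D : ℕ) : K :=
  ∑ k ∈ s.piAntidiag D, ∏ i ∈ s, v i ^ k i

lemma hsum_zero (v : ι → K) (s : Finset ι) : hsum v s 0 = 1 := by
  simp [hsum]

lemma hsum_empty (v : ι → K) (D : ℕ) : hsum v (∅ : Finset ι) D = if D = 0 then 1 else 0 := by
  rw [hsum, Finset.piAntidiag_empty]
  split <;> simp

lemma hsum_insert (v : ι → K) {a : ι} {s : Finset ι} (ha : a ∉ s) (D : ℕ) :
    hsum v (insert a s) D = ∑ p ∈ Finset.HasAntidiagonal.antidiagonal D, v a ^ p.1 * hsum v s p.2 := by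
  rw [← Finset.cons_eq_insert a s ha, hsum, Finset.piAntidiag_cons ha, Finset.sum_disjiUnion]
  refine Finset.sum_congr rfl fun p hp => ?_
  rw [Finset.sum_map, hsum, Finset.mul_sum]
  refine Finset.sum_congr rfl fun f hf => ?_
  obtain ⟨hsum_f, hsupp⟩ := Finset.mem_piAntidiag.mp hf
  have hfa : f a = 0 := by
    by_contra h; exact ha (hsupp a h)
  simp only [addRightEmbedding_apply]
  rw [Finset.prod_cons]
  have h1 : ∀ i ∈ s, v i ^ ((f + fun t => if t = a then p.1 else 0) i) = v i ^ f i := by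
    intro i hi
    have : i ≠ a := fun h => ha (h ▸ hi)
    simp [this]
  rw [Finset.prod_congr rfl h1]
  simp [hfa]

lemma hsum_singleton (v : ι → K) (a : ι) (D : ℕ) : hsum v {a} D = v a ^ D := by
  have : ({a} : Finset ι) = insert a ∅ := rfl
  rw [this, hsum_insert v (Finset.notMem_empty a)]
  rw [Finset.sum_eq_single (D, 0)]
  · simp [hsum_empty]
  · intro p hp hne
    have hm := Finset.HasAntidiagonal.mem_antidiagonal.mp hp
    have h2 : p.2 ≠ 0 := fun h0 => hne (Prod.ext (by omega) h0)
    simp [hsum_empty, h2]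
  · intro h; exact absurd (Finset.HasAntidiagonal.mem_antidiagonal.mpr (by simp)) h

lemma hsum_rec (v : ι → K) {a : ι} {s : Finset ι} (ha : a ∉ s) (D : ℕ) :
    hsum v (insert a s) (D + 1) = hsum v s (D + 1) + v a * hsum v (insert a s) D := by
  rw [hsum_insert v ha, hsum_insert v ha, Finset.Nat.antidiagonal_succ, Finset.sum_cons,
    Finset.sum_map, Finset.mul_sum]
  simp only [pow_zero, one_mul]
  congr 1
  refine Finset.sum_congr rfl fun p hp => ?_
  simp only [Function.Embedding.coe_prodMap, Function.Embedding.coeFn_mk,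
    Function.Embedding.refl_apply, Prod.map_fst, Prod.map_snd]
  rw [pow_succ]
  ring

lemma L_rec {s : Finset ι} {v : ι → K} (hvs : Set.InjOn v s) {a : ι} (ha : a ∈ s) (m : ℕ) :
    ∑ i ∈ s, v i ^ (m + 1) / ∏ j ∈ s.erase i, (v i - v j)
      = (∑ i ∈ s.erase a, v i ^ m / ∏ j ∈ (s.erase a).erase i, (v i - v j))
        + v a * ∑ i ∈ s, v i ^ m / ∏ j ∈ s.erase i, (v i - v j) := by
  have step : ∀ i ∈ s, v i ^ (m + 1) / ∏ j ∈ s.erase i, (v i - v j)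
      = v i ^ m * (v i - v a) / ∏ j ∈ s.erase i, (v i - v j)
        + v a * (v i ^ m / ∏ j ∈ s.erase i, (v i - v j)) := by
    intro i _
    rw [mul_div_assoc']
    rw [← add_div]
    congr 1
    ring
  rw [Finset.sum_congr rfl step, Finset.sum_add_distrib, ← Finset.mul_sum]
  congr 1
  rw [← Finset.add_sum_erase _ _ ha, sub_self, mul_zero, zero_div, zero_add]
  refine Finset.sum_congr rfl fun i hi => ?_
  obtain ⟨hia, his⟩ := Finset.mem_erase.mp hi
  have hais : a ∈ s.erase i := Finset.mem_erase.mpr ⟨fun h => hia h.symm, ha⟩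
  rw [← Finset.mul_prod_erase _ _ hais, Finset.erase_right_comm]
  have hne : v i - v a ≠ 0 := sub_ne_zero.mpr (fun h => hia (hvs his ha h))
  rw [mul_comm (v i ^ m) (v i - v a)]
  exact mul_div_mul_left _ _ hne

lemma L_eq_hsum (v : ι → K) : ∀ N D (s : Finset ι), D + s.card ≤ N → s.Nonempty →
    Set.InjOn v s →
    ∑ i ∈ s, v i ^ (D + (s.card - 1)) / ∏ j ∈ s.erase i, (v i - v j) = hsum v s D := by
  intro N
  induction N with
  | zero =>
    intro D s hle hs _
    exact absurd hle (by have := hs.card_pos; omega)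
  | succ N ih =>
    intro D s hle hs hvs
    cases D with
    | zero =>
      rw [hsum_zero, zero_add]
      rw [L_low hvs (by have := hs.card_pos; omega)]
      simp
    | succ e =>
      rcases Nat.lt_or_ge s.card 2 with hc | hc
      · -- card = 1
        have hc1 : s.card = 1 := by have := hs.card_pos; omega
        obtain ⟨a, rfl⟩ := Finset.card_eq_one.mp hc1
        rw [hsum_singleton]
        simp
      · obtain ⟨a, ha⟩ := hs
        have hta : a ∉ s.erase a := Finset.notMem_erase a s
        have hts : s.erase a ⊆ s := Finset.erase_subset a s
        have htcard : (s.erase a).card = s.card - 1 := Finset.card_erase_of_mem ha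
        have htne : (s.erase a).Nonempty := Finset.card_pos.mp (by omega)
        have hvt : Set.InjOn v (s.erase a) := hvs.mono (Finset.coe_subset.mpr hts)
        have hexp : e + 1 + (s.card - 1) = (e + (s.card - 1)) + 1 := by omega
        rw [hexp, L_rec hvs ha]
        have e1 : e + (s.card - 1) = (e + 1) + ((s.erase a).card - 1) := by omega
        have e2 : e + (s.card - 1) = e + (s.card - 1) := rfl
        have ih1 : ∑ i ∈ s.erase a, v i ^ (e + (s.card - 1)) /
            ∏ j ∈ (s.erase a).erase i, (v i - v j) = hsum v (s.erase a) (e + 1) := by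
          rw [e1]; exact ih (e + 1) (s.erase a) (by omega) htne hvt
        have ih2 : ∑ i ∈ s, v i ^ (e + (s.card - 1)) / ∏ j ∈ s.erase i, (v i - v j)
            = hsum v s e := ih e s (by omega) ⟨a, ha⟩ hvs
        rw [ih1, ih2]
        have hins : s = insert a (s.erase a) := (Finset.insert_erase ha).symm
        conv_rhs => rw [hins]
        rw [hsum_rec v hta, ← hins]


end Aux

/-- For pairwise distinct nonzero `x₁,…,xₙ` and any `D ≥ 0`:
`∑ᵢ xᵢ^{-D-1} / ∏_{j≠i}(xᵢ - xⱼ) = (-1)^{n-1}/(x₁⋯xₙ) · h_D(x₁⁻¹,…,xₙ⁻¹)`,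
where `h_D` is the complete homogeneous symmetric polynomial of degree `D`,
written as the sum over all monomials of total degree `D`. -/
theorem sum_inv_pow_eq_complete_homogeneous {K : Type*} [Field K]
    (n : ℕ) (hn : 1 ≤ n) (D : ℕ) (x : Fin n → K)
    (hinj : Function.Injective x) (hx0 : ∀ i, x i ≠ 0) :
    ∑ i : Fin n, (x i)⁻¹ ^ (D + 1) / ∏ j ∈ Finset.univ.erase i, (x i - x j)
    = (-1) ^ (n - 1) / (∏ i, x i) *
        ∑ k ∈ Finset.filter (fun k => ∑ i, k i = D)
            (Fintype.piFinset fun _ : Fin n => Finset.range (D + 1)),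
          ∏ i, (x i)⁻¹ ^ (k i) := by
  obtain ⟨m, rfl⟩ : ∃ m, n = m + 1 := ⟨n - 1, by omega⟩
  set y : Fin (m + 1) → K := fun i => (x i)⁻¹ with hy
  have hy0 : ∀ i, y i ≠ 0 := fun i => inv_ne_zero (hx0 i)
  have hyinj : Function.Injective y := fun i j h => hinj (by
    rw [← inv_inv (x i), ← inv_inv (x j)]
    exact congrArg Inv.inv h)
  have hvs : Set.InjOn y (Finset.univ : Finset (Fin (m + 1))) := fun i _ j _ h => hyinj h
  -- the filtered piFinset is `piAntidiag univ D`
  have hfin : (Finset.univ : Finset (Fin (m + 1))).piAntidiag D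
      = Finset.filter (fun k => ∑ i, k i = D)
          (Fintype.piFinset fun _ : Fin (m + 1) => Finset.range (D + 1)) := by
    ext k
    simp only [Finset.mem_piAntidiag, Finset.mem_filter, Fintype.mem_piFinset, Finset.mem_range]
    constructor
    · rintro ⟨hk, -⟩
      refine ⟨fun i => ?_, hk⟩
      have h1 := Finset.single_le_sum (f := k) (fun i _ => Nat.zero_le _) (Finset.mem_univ i)
      have h2 : k i ≤ D := le_trans h1 (le_of_eq hk)
      omega
    · rintro ⟨-, hk⟩
      exact ⟨hk, fun i _ => Finset.mem_univ i⟩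
  -- termwise transformation
  have hterm : ∀ i : Fin (m + 1), (x i)⁻¹ ^ (D + 1) / ∏ j ∈ Finset.univ.erase i, (x i - x j)
      = ((-1) ^ m * ∏ j, y j) *
          (y i ^ (D + m) / ∏ j ∈ Finset.univ.erase i, (y i - y j)) := by
    intro i
    have hE : (Finset.univ.erase i).card = m := by
      rw [Finset.card_erase_of_mem (Finset.mem_univ i), Finset.card_univ, Fintype.card_fin]
      omega
    have hstep : ∀ j ∈ Finset.univ.erase i, x i - x j = -1 * (y i - y j) / (y i * y j) := by
      intro j _
      have hx : x i - x j = (y i)⁻¹ - (y j)⁻¹ := by simp [hy]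
      rw [hx, inv_sub_inv (hy0 i) (hy0 j)]
      ring
    rw [Finset.prod_congr rfl hstep, Finset.prod_div_distrib, Finset.prod_mul_distrib,
      Finset.prod_mul_distrib, Finset.prod_const, Finset.prod_const, hE]
    have hP : ∏ j ∈ Finset.univ.erase i, (y i - y j) ≠ 0 :=
      Finset.prod_ne_zero_iff.mpr fun j hj =>
        sub_ne_zero.mpr fun h => (Finset.mem_erase.mp hj).1 (hyinj h).symm
    have hQ : ∏ j ∈ Finset.univ.erase i, y j ≠ 0 :=
      Finset.prod_ne_zero_iff.mpr fun j _ => hy0 j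
    have hall : ∏ j, y j = y i * ∏ j ∈ Finset.univ.erase i, y j :=
      (Finset.mul_prod_erase _ _ (Finset.mem_univ i)).symm
    rw [hall]
    have hgoal : ∀ P Q z : K, P ≠ 0 → Q ≠ 0 → z ≠ 0 →
        z ^ (D + 1) / ((-1 : K) ^ m * P / (z ^ m * Q))
          = ((-1 : K) ^ m * (z * Q)) * (z ^ (D + m) / P) := by
      intro P Q z hP' hQ' hz'
      rcases neg_one_pow_eq_or K m with hε | hε <;> rw [hε]
      · field_simp
        ring
      · field_simp
        ring
    exact hgoal _ _ _ hP hQ (hy0 i)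
  rw [Finset.sum_congr rfl fun i _ => hterm i, ← Finset.mul_sum]
  have hL := L_eq_hsum y (D + (m + 1)) D Finset.univ (by simp) Finset.univ_nonempty hvs
  have hc : (Finset.univ : Finset (Fin (m + 1))).card - 1 = m := by simp
  rw [hc] at hL
  rw [hL]
  have hprodx : ∏ j, y j = (∏ i, x i)⁻¹ := by
    rw [hy, ← Finset.prod_inv_distrib]
  rw [hprodx, hsum, hfin]
  have hm1 : m + 1 - 1 = m := rfl
  rw [hm1, div_eq_mul_inv]
end

section
/- Watson's lemma: Let f : ℝ_{>0} → ℂ be a continuous function such that (i) there exists an integer d ≥ 0 with f(t) = O(t^d) as t → 0^+, and (ii) there exists ν ∈ ℝ with f(t) = O(e^{νt}) as t → +∞. Then ∫_0^∞ e^{-tx} f(t) dt = O(x^{-(d+1)}) as x → +∞. -/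
open Filter MeasureTheory Set

/-- Watson's lemma: if `f : ℝ → ℂ` is continuous on `(0,∞)`, `f(t) = O(t^d)` as `t → 0⁺`
and `f(t) = O(e^{νt})` as `t → +∞`, then `∫_0^∞ e^{-tx} f(t) dt = O(x^{-(d+1)})`
as `x → +∞`. -/
theorem watson_lemma (f : ℝ → ℂ) (hf : ContinuousOn f (Set.Ioi 0))
    (d : ℕ) (h0 : f =O[nhdsWithin 0 (Set.Ioi 0)] fun t : ℝ => t ^ d)
    (ν : ℝ) (hinf : f =O[atTop] fun t : ℝ => Real.exp (ν * t)) :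
    (fun x : ℝ => ∫ t in Set.Ioi (0 : ℝ), Real.exp (-(t * x)) • f t)
      =O[atTop] fun x : ℝ => (x ^ (d + 1))⁻¹ := by
  have hbound : ∃ B > 0, ∀ t ∈ Set.Ioi (0:ℝ), ‖f t‖ ≤ B * (t ^ d * Real.exp ((|ν|+1) * t)) := by
    set μ := |ν| + 1 with hμ
    obtain ⟨c₁, hc₁⟩ := h0.bound
    obtain ⟨δ, hδ, hδ'⟩ := mem_nhdsGT_iff_exists_Ioc_subset.mp hc₁
    obtain ⟨c₂, hc₂⟩ := hinf.bound
    obtain ⟨T, hT⟩ := eventually_atTop.mp hc₂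
    set T₁ := max T δ with hT₁
    have hδT : δ ≤ T₁ := le_max_right _ _
    obtain ⟨M, hM⟩ := (isCompact_Icc (a := δ) (b := T₁)).exists_bound_of_continuousOn
      (hf.mono (fun t ht => lt_of_lt_of_le hδ ht.1))
    set B := max (max c₁ 0) ((max M (max c₂ 0)) / δ ^ d) + 1 with hB
    have hB0 : 0 < B := by positivity
    refine ⟨B, hB0, fun t ht => ?_⟩
    have ht0 : (0:ℝ) < t := ht
    have hexp1 : (1:ℝ) ≤ Real.exp (μ * t) := by
      rw [Real.one_le_exp_iff]; positivity
    have htd : (0:ℝ) ≤ t ^ d := by positivity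
    have hK : max (max c₁ 0) ((max M (max c₂ 0)) / δ ^ d) ≤ B := by
      rw [hB]; linarith
    rcases le_or_gt t δ with h1 | h1
    · have := hδ' ⟨ht0, h1⟩
      simp only [Set.mem_setOf_eq, norm_pow, Real.norm_eq_abs, abs_of_pos ht0] at this
      calc ‖f t‖ ≤ c₁ * t ^ d := this
        _ ≤ B * (t ^ d * 1) := by
            rw [mul_one]
            exact mul_le_mul (le_trans (le_max_left _ _) (le_trans (le_max_left _ _) hK))
              le_rfl htd (le_of_lt hB0)
        _ ≤ B * (t ^ d * Real.exp (μ * t)) := by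
            apply mul_le_mul_of_nonneg_left _ (le_of_lt hB0)
            exact mul_le_mul_of_nonneg_left hexp1 htd
    · have hδ0 : (0:ℝ) < δ := hδ
      have hδd : (0:ℝ) < δ ^ d := by positivity
      have htδd : δ ^ d ≤ t ^ d := pow_le_pow_left₀ (le_of_lt hδ) (le_of_lt h1) d
      have key : ∀ c : ℝ, 0 ≤ c → ‖f t‖ ≤ c → ‖f t‖ ≤ B * (t ^ d * Real.exp (μ * t)) ∨ True := fun _ _ _ => Or.inr trivial
      rcases le_or_gt t T₁ with h2 | h2
      · have hMt := hM t ⟨le_of_lt h1, h2⟩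
        calc ‖f t‖ ≤ M := hMt
          _ ≤ (max M (max c₂ 0)) / δ ^ d * δ ^ d := by
              rw [div_mul_cancel₀ _ (ne_of_gt hδd)]; exact le_max_left _ _
          _ ≤ B * (t ^ d * Real.exp (μ * t)) := by
              calc (max M (max c₂ 0)) / δ ^ d * δ ^ d
                  ≤ B * (t ^ d * 1) := by
                    rw [mul_one]
                    exact mul_le_mul (le_trans (le_max_right _ _) hK) htδd (le_of_lt hδd) (le_of_lt hB0)
                _ ≤ B * (t ^ d * Real.exp (μ * t)) := by
                    apply mul_le_mul_of_nonneg_left _ (le_of_lt hB0)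
                    exact mul_le_mul_of_nonneg_left hexp1 htd
      · have hTt : T ≤ t := le_of_lt (lt_of_le_of_lt (le_max_left T δ) h2)
        have := hT t hTt
        rw [Real.norm_eq_abs, Real.abs_exp] at this
        have hexpν : Real.exp (ν * t) ≤ Real.exp (μ * t) := by
          apply Real.exp_le_exp.mpr
          apply mul_le_mul_of_nonneg_right _ (le_of_lt ht0)
          rw [hμ]; linarith [le_abs_self ν]
        calc ‖f t‖ ≤ c₂ * Real.exp (ν * t) := this
          _ ≤ max c₂ 0 * Real.exp (μ * t) :=
              mul_le_mul (le_max_left _ _) hexpν (Real.exp_pos _).le (le_max_right _ _)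
          _ = (max c₂ 0 / δ ^ d) * δ ^ d * Real.exp (μ * t) := by
              rw [div_mul_cancel₀ _ (ne_of_gt hδd)]
          _ ≤ B * (t ^ d * Real.exp (μ * t)) := by
              rw [← mul_assoc]
              apply mul_le_mul_of_nonneg_right _ (Real.exp_pos _).le
              have h3 : max c₂ 0 / δ ^ d ≤ B := by
                refine le_trans (le_trans ?_ (le_max_right _ _)) hK
                gcongr ?_ / δ ^ d
                exact le_max_right M _
              exact mul_le_mul h3 htδd (le_of_lt hδd) (le_of_lt hB0)

  obtain ⟨B, hB0, hbd⟩ := hbound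
  set μ := |ν| + 1 with hμdef
  have hμ0 : 0 < μ := by positivity
  rw [Asymptotics.isBigO_iff]
  refine ⟨B * Real.Gamma (d + 1) * 2 ^ (d + 1), eventually_atTop.mpr ⟨2 * μ, fun x hx => ?_⟩⟩
  have hx0 : 0 < x := lt_of_lt_of_le (by positivity) hx
  have hr : 0 < x - μ := by linarith
  set r := x - μ with hrdef
  -- integrability of the dominating function
  have hint : IntegrableOn (fun t : ℝ => B * (t ^ d * Real.exp (-(r * t)))) (Set.Ioi 0) := by
    apply Integrable.const_mul
    have := integrableOn_rpow_mul_exp_neg_mul_rpow (p := 1) (s := d) (b := r)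
      (neg_one_lt_zero.trans_le (Nat.cast_nonneg d)) zero_lt_one hr
    apply this.congr_fun _ measurableSet_Ioi
    intro t ht
    simp only [Real.rpow_natCast, Real.rpow_one, neg_mul]
  -- integral value
  have hval : ∫ t in Set.Ioi (0:ℝ), B * (t ^ d * Real.exp (-(r * t)))
      = B * ((1 / r) ^ ((d:ℝ) + 1) * Real.Gamma (d + 1)) := by
    rw [integral_const_mul]
    congr 1
    rw [← Real.integral_rpow_mul_exp_neg_mul_Ioi (by positivity : (0:ℝ) < (d:ℝ)+1) hr]
    refine setIntegral_congr_fun measurableSet_Ioi (fun t ht => ?_)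
    rw [add_sub_cancel_right, Real.rpow_natCast]
  -- bound the norm of the integral
  have hle : ‖∫ t in Set.Ioi (0:ℝ), Real.exp (-(t * x)) • f t‖
      ≤ ∫ t in Set.Ioi (0:ℝ), B * (t ^ d * Real.exp (-(r * t))) := by
    apply norm_integral_le_of_norm_le hint
    filter_upwards [ae_restrict_mem measurableSet_Ioi] with t ht
    have ht0 : (0:ℝ) < t := ht
    rw [norm_smul, Real.norm_eq_abs, Real.abs_exp]
    calc Real.exp (-(t * x)) * ‖f t‖
        ≤ Real.exp (-(t * x)) * (B * (t ^ d * Real.exp (μ * t))) :=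
          mul_le_mul_of_nonneg_left (hbd t ht) (Real.exp_pos _).le
      _ = B * (t ^ d * Real.exp (-(r * t))) := by
          rw [show -(r * t) = μ * t + -(t * x) by rw [hrdef]; ring, Real.exp_add]
          ring
  refine hle.trans (le_of_eq_of_le hval ?_)
  have h2x : 1 / r ≤ 2 / x := by
    rw [div_le_div_iff₀ hr hx0]
    linarith
  have hrw : ((d:ℝ) + 1) = ((d + 1 : ℕ) : ℝ) := by push_cast; ring
  have hpow : (1 / r) ^ ((d:ℝ) + 1) ≤ (2 / x) ^ ((d:ℝ) + 1) :=
    Real.rpow_le_rpow (by positivity) h2x (by positivity)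
  have hΓ : 0 < Real.Gamma ((d:ℝ) + 1) := Real.Gamma_pos_of_pos (by positivity)
  calc B * ((1 / r) ^ ((d:ℝ) + 1) * Real.Gamma (d + 1))
      ≤ B * ((2 / x) ^ ((d:ℝ) + 1) * Real.Gamma (d + 1)) := by
        apply mul_le_mul_of_nonneg_left _ hB0.le
        exact mul_le_mul_of_nonneg_right hpow hΓ.le
    _ = B * Real.Gamma (d + 1) * 2 ^ (d + 1) * (x ^ (d + 1))⁻¹ := by
        rw [hrw, Real.rpow_natCast, div_pow]
        field_simp
    _ ≤ B * Real.Gamma (d + 1) * 2 ^ (d + 1) * ‖(x ^ (d + 1))⁻¹‖ := by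
        rw [Real.norm_eq_abs, abs_of_pos (by positivity)]
end

section
/- Let Ω ⊆ ℂ be a star-shaped open set containing 0 (i.e., for every s ∈ Ω the segment [0, s] is contained in Ω), and let φ̂ and ψ̂ be holomorphic on Ω. Then their convolution product (φ̂ ∗ ψ̂)(s) = d/ds ∫_0^s φ̂(σ) ψ̂(s − σ) dσ is holomorphic on Ω. -/
open intervalIntegral

open Metric MeasureTheory Set

private lemma conv_integral_diffOn (Ω : Set ℂ) (hΩ : IsOpen Ω)
    (hstar : ∀ s ∈ Ω, segment ℝ 0 s ⊆ Ω)
    (φ ψ : ℂ → ℂ) (hφ : DifferentiableOn ℂ φ Ω) (hψ : DifferentiableOn ℂ ψ Ω) :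
    DifferentiableOn ℂ
      (fun s : ℂ => ∫ t in (0:ℝ)..1, φ ((t : ℂ) * s) * ψ (s - (t : ℂ) * s)) Ω := by
  have hφa : AnalyticOnNhd ℂ φ Ω := hφ.analyticOnNhd hΩ
  have hψa : AnalyticOnNhd ℂ ψ Ω := hψ.analyticOnNhd hΩ
  have hφ' : ContinuousOn (deriv φ) Ω := hφa.deriv.continuousOn
  have hψ' : ContinuousOn (deriv ψ) Ω := hψa.deriv.continuousOn
  intro s₀ hs₀
  obtain ⟨ε, εpos, hball⟩ := Metric.isOpen_iff.mp hΩ s₀ hs₀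
  set r : ℝ := ε / 2 with hr
  have rpos : 0 < r := by positivity
  have hcb : closedBall s₀ r ⊆ Ω := fun x hx => hball <| by
    simp only [mem_closedBall] at hx
    simp only [mem_ball]
    linarith
  set K : Set ℂ := (fun p : ℝ × ℂ => (p.1 : ℂ) * p.2) '' (Icc (0:ℝ) 1 ×ˢ closedBall s₀ r)
    with hK
  have hKc : IsCompact K := ((isCompact_Icc).prod (isCompact_closedBall _ _)).image
    (by continuity)
  have hKΩ : K ⊆ Ω := by
    rintro z ⟨⟨t, s⟩, ⟨⟨ht0, ht1⟩, hs⟩, rfl⟩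
    refine hstar s (hcb hs) ?_
    exact ⟨1 - t, t, by linarith, ht0, by ring, by
      simp [smul_zero, Complex.real_smul]⟩
  have hmemK : ∀ (t : ℝ), t ∈ Icc (0:ℝ) 1 → ∀ x ∈ closedBall s₀ r,
      (t : ℂ) * x ∈ K ∧ x - (t : ℂ) * x ∈ K := by
    intro t ht x hx
    have h1t : 1 - t ∈ Icc (0:ℝ) 1 := ⟨by linarith [ht.2], by linarith [ht.1]⟩
    refine ⟨⟨(t, x), ⟨ht, hx⟩, rfl⟩, ⟨(1 - t, x), ⟨h1t, hx⟩, ?_⟩⟩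
    push_cast; ring
  obtain ⟨C₁, hC₁⟩ := hKc.exists_bound_of_continuousOn (hφ.continuousOn.mono hKΩ)
  obtain ⟨C₂, hC₂⟩ := hKc.exists_bound_of_continuousOn (hψ.continuousOn.mono hKΩ)
  obtain ⟨C₃, hC₃⟩ := hKc.exists_bound_of_continuousOn (hφ'.mono hKΩ)
  obtain ⟨C₄, hC₄⟩ := hKc.exists_bound_of_continuousOn (hψ'.mono hKΩ)
  set C : ℝ := max (max C₁ C₂) (max C₃ C₄) ⊔ 0 with hCdef
  have hC0 : 0 ≤ C := le_max_right _ _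
  have hC₁' : ∀ z ∈ K, ‖φ z‖ ≤ C := fun z hz =>
    (hC₁ z hz).trans (le_max_of_le_left ((le_max_left _ _).trans (le_max_left _ _)))
  have hC₂' : ∀ z ∈ K, ‖ψ z‖ ≤ C := fun z hz =>
    (hC₂ z hz).trans (le_max_of_le_left ((le_max_right _ _).trans (le_max_left _ _)))
  have hC₃' : ∀ z ∈ K, ‖deriv φ z‖ ≤ C := fun z hz =>
    (hC₃ z hz).trans (le_max_of_le_left ((le_max_left _ _).trans (le_max_right _ _)))
  have hC₄' : ∀ z ∈ K, ‖deriv ψ z‖ ≤ C := fun z hz =>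
    (hC₄ z hz).trans (le_max_of_le_left ((le_max_right _ _).trans (le_max_right _ _)))
  -- the integrand and its derivative in s
  set F : ℂ → ℝ → ℂ := fun x t => φ ((t : ℂ) * x) * ψ (x - (t : ℂ) * x) with hF
  set F' : ℂ → ℝ → ℂ := fun x t =>
      ((t : ℂ) * deriv φ ((t : ℂ) * x)) * ψ (x - (t : ℂ) * x)
      + φ ((t : ℂ) * x) * ((1 - (t : ℂ)) * deriv ψ (x - (t : ℂ) * x)) with hF'
  have hmeas : ∀ x ∈ closedBall s₀ r, AEStronglyMeasurable (F x)
      (MeasureTheory.volume.restrict (Set.uIoc (0:ℝ) 1)) := by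
    intro x hx
    have hcont : ContinuousOn (F x) (Icc (0:ℝ) 1) := by
      apply ContinuousOn.mul
      · exact hφ.continuousOn.comp ((Complex.continuous_ofReal.mul continuous_const).continuousOn)
          (fun t ht => hKΩ (hmemK t ht x hx).1)
      · exact hψ.continuousOn.comp
          ((continuous_const.sub (Complex.continuous_ofReal.mul continuous_const)).continuousOn)
          (fun t ht => hKΩ (hmemK t ht x hx).2)
    exact (hcont.mono (by rw [Set.uIoc_of_le (zero_le_one)]; exact Ioc_subset_Icc_self)
      ).aestronglyMeasurable measurableSet_uIoc
  have hdiff : ∀ (t : ℝ), t ∈ Icc (0:ℝ) 1 → ∀ x ∈ ball s₀ r,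
      HasDerivAt (fun x => F x t) (F' x t) x := by
    intro t ht x hx
    have hx' : x ∈ closedBall s₀ r := ball_subset_closedBall hx
    have h1 : HasDerivAt (fun x : ℂ => (t : ℂ) * x) (t : ℂ) x := by
      simpa using (hasDerivAt_id x).const_mul (t : ℂ)
    have h2 : HasDerivAt (fun x : ℂ => x - (t : ℂ) * x) (1 - (t : ℂ)) x :=
      (hasDerivAt_id x).sub h1
    have hφd : HasDerivAt φ (deriv φ ((t : ℂ) * x)) ((t : ℂ) * x) :=
      (hφ.differentiableAt (hΩ.mem_nhds (hKΩ (hmemK t ht x hx').1))).hasDerivAt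
    have hψd : HasDerivAt ψ (deriv ψ (x - (t : ℂ) * x)) (x - (t : ℂ) * x) :=
      (hψ.differentiableAt (hΩ.mem_nhds (hKΩ (hmemK t ht x hx').2))).hasDerivAt
    have hA : HasDerivAt (fun x => φ ((t : ℂ) * x)) ((t : ℂ) * deriv φ ((t : ℂ) * x)) x := by
      have := HasDerivAt.comp x hφd h1
      rw [mul_comm] at this
      exact this
    have hB : HasDerivAt (fun x => ψ (x - (t : ℂ) * x))
        ((1 - (t : ℂ)) * deriv ψ (x - (t : ℂ) * x)) x := by
      have := HasDerivAt.comp x hψd h2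
      rw [mul_comm] at this
      exact this
    exact hA.mul hB
  have key : HasDerivAt (fun x => ∫ t in (0:ℝ)..1, F x t) (∫ t in (0:ℝ)..1, F' s₀ t) s₀ := by
    refine (intervalIntegral.hasDerivAt_integral_of_dominated_loc_of_deriv_le (Metric.ball_mem_nhds s₀ rpos)
      (F := F) (F' := F') (bound := fun _ => C * C + C * C) ?_ ?_ ?_ ?_ ?_ ?_).2
    · filter_upwards [Metric.closedBall_mem_nhds s₀ rpos] with x hx using hmeas x hx
    · -- interval integrability of F s₀
      apply ContinuousOn.intervalIntegrable
      rw [Set.uIcc_of_le zero_le_one]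
      apply ContinuousOn.mul
      · exact hφ.continuousOn.comp ((Complex.continuous_ofReal.mul continuous_const).continuousOn)
          (fun t ht => hKΩ (hmemK t ht s₀ (mem_closedBall_self rpos.le)).1)
      · exact hψ.continuousOn.comp
          ((continuous_const.sub (Complex.continuous_ofReal.mul continuous_const)).continuousOn)
          (fun t ht => hKΩ (hmemK t ht s₀ (mem_closedBall_self rpos.le)).2)
    · -- measurability of F' s₀
      have hcont : ContinuousOn (F' s₀) (Icc (0:ℝ) 1) := by
        have hm1 : ∀ t ∈ Icc (0:ℝ) 1, (t : ℂ) * s₀ ∈ Ω :=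
          fun t ht => hKΩ (hmemK t ht s₀ (mem_closedBall_self rpos.le)).1
        have hm2 : ∀ t ∈ Icc (0:ℝ) 1, s₀ - (t : ℂ) * s₀ ∈ Ω :=
          fun t ht => hKΩ (hmemK t ht s₀ (mem_closedBall_self rpos.le)).2
        apply ContinuousOn.add
        · exact ((Complex.continuous_ofReal.continuousOn).mul
            (hφ'.comp ((Complex.continuous_ofReal.mul continuous_const).continuousOn) hm1)).mul
            (hψ.continuousOn.comp
              ((continuous_const.sub (Complex.continuous_ofReal.mul continuous_const)).continuousOn) hm2)
        · exact (hφ.continuousOn.comp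
            ((Complex.continuous_ofReal.mul continuous_const).continuousOn) hm1).mul
            (((continuous_const.sub Complex.continuous_ofReal).continuousOn).mul
              (hψ'.comp
                ((continuous_const.sub (Complex.continuous_ofReal.mul continuous_const)).continuousOn) hm2))
      exact (hcont.mono (by rw [Set.uIoc_of_le (zero_le_one)]; exact Ioc_subset_Icc_self)
        ).aestronglyMeasurable measurableSet_uIoc
    · -- bound
      filter_upwards with t ht x hx
      rw [Set.uIoc_of_le zero_le_one] at ht
      have ht' : t ∈ Icc (0:ℝ) 1 := Ioc_subset_Icc_self ht
      have hx' : x ∈ closedBall s₀ r := ball_subset_closedBall hx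
      obtain ⟨h1, h2⟩ := hmemK t ht' x hx'
      have e1 : ‖((t : ℂ) * deriv φ ((t : ℂ) * x)) * ψ (x - (t : ℂ) * x)‖ ≤ C * C := by
        rw [norm_mul, norm_mul]
        have : ‖(t : ℂ)‖ ≤ 1 := by
          rw [Complex.norm_real, Real.norm_eq_abs, abs_of_nonneg ht'.1]; exact ht'.2
        calc ‖(t : ℂ)‖ * ‖deriv φ ((t : ℂ) * x)‖ * ‖ψ (x - (t : ℂ) * x)‖
            ≤ 1 * C * C := by
              gcongr <;> [exact hC₃' _ h1; exact hC₂' _ h2]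
          _ = C * C := by ring
      have e2 : ‖φ ((t : ℂ) * x) * ((1 - (t : ℂ)) * deriv ψ (x - (t : ℂ) * x))‖ ≤ C * C := by
        rw [norm_mul, norm_mul]
        have : ‖(1 : ℂ) - (t : ℂ)‖ ≤ 1 := by
          have : ((1 : ℂ) - (t : ℂ)) = ((1 - t : ℝ) : ℂ) := by push_cast; ring
          rw [this, Complex.norm_real, Real.norm_eq_abs, abs_of_nonneg (by linarith [ht'.2])]
          linarith [ht'.1]
        calc ‖φ ((t : ℂ) * x)‖ * (‖(1 : ℂ) - (t : ℂ)‖ * ‖deriv ψ (x - (t : ℂ) * x)‖)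
            ≤ C * (1 * C) := by
              gcongr <;> [exact hC₁' _ h1; exact hC₄' _ h2]
          _ = C * C := by ring
      exact (norm_add_le _ _).trans (add_le_add e1 e2)
    · exact intervalIntegrable_const
    · filter_upwards with t ht x hx
      rw [Set.uIoc_of_le zero_le_one] at ht
      exact hdiff t (Ioc_subset_Icc_self ht) x hx
  exact key.differentiableAt.differentiableWithinAt

/-- Analyticity of the convolution product (Lemma 2.9): if `Ω ⊆ ℂ` is a star-shaped
open set (for every `s ∈ Ω` the segment `[0,s]` lies in `Ω`) and `φ`, `ψ` are
holomorphic on `Ω`, then the convolution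
`(φ ∗ ψ)(s) = d/ds ∫_0^s φ(σ) ψ(s-σ) dσ`
(where the integral along `[0,s]` is parametrised by `σ = t·s`, `t ∈ [0,1]`)
is holomorphic on `Ω`. -/
theorem convolution_holomorphic_on_star_shaped (Ω : Set ℂ) (hΩ : IsOpen Ω)
    (hstar : ∀ s ∈ Ω, segment ℝ 0 s ⊆ Ω)
    (φ ψ : ℂ → ℂ) (hφ : DifferentiableOn ℂ φ Ω) (hψ : DifferentiableOn ℂ ψ Ω) :
    DifferentiableOn ℂ
      (deriv fun s : ℂ =>
        s * ∫ t in (0:ℝ)..1, φ ((t : ℂ) * s) * ψ (s - (t : ℂ) * s)) Ω := by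
  have hG := conv_integral_diffOn Ω hΩ hstar φ ψ hφ hψ
  have hF : DifferentiableOn ℂ
      (fun s : ℂ => s * ∫ t in (0:ℝ)..1, φ ((t : ℂ) * s) * ψ (s - (t : ℂ) * s)) Ω :=
    (differentiable_id.differentiableOn).mul hG
  exact ((hF.analyticOnNhd hΩ).deriv).differentiableOn
end

section
/- Schur's evaluation of the Vandermonde determinant on roots of unity: for ζ = e^{2πi/r} with r ≥ 2, the determinant of the r × r matrix (ζ^{αm}) with rows indexed by m = 0,...,r−1 and columns by α = 1,...,r equals r^{r/2} · (−1)^{(r−1)(3r+2)/4}. -/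
open Complex

section SchurAux

open Finset Matrix

private lemma schur_gaussC (n : ℕ) : ∑ i ∈ Finset.range n, (i:ℂ) = n*(n-1)/2 := by
  induction n with
  | zero => simp
  | succ n ih => rw [Finset.sum_range_succ, ih]; push_cast; ring

private lemma schur_factor_eq (r : ℕ) (hr : 2 ≤ r) (i j : Fin r) (hij : i < j) :
    Complex.exp (2 * ↑Real.pi * Complex.I / ↑r) ^ (j.val+1) - Complex.exp (2 * ↑Real.pi * Complex.I / ↑r) ^ (i.val+1)
    = ((2 * Real.sin (Real.pi * ((j.val:ℝ) - i.val)/r) : ℝ) : ℂ) *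
      Complex.exp (↑Real.pi * I * ((i.val + j.val + 2)/r + 1/2)) := by
  have hr0 : (r:ℂ) ≠ 0 := Nat.cast_ne_zero.mpr (by omega)
  have hIhalf : Complex.exp (↑Real.pi * I * (1/2 : ℂ)) = I := by
    rw [show (↑Real.pi * I * (1/2:ℂ)) = ↑(Real.pi/2) * I by push_cast; ring, Complex.exp_mul_I]
    push_cast; simp
  set B : ℂ := ↑Real.pi * I * (((i.val:ℂ) + j.val + 2)/r) with hB
  set θ : ℂ := ↑Real.pi * ((j.val:ℂ) - i.val)/r * I with hθ
  have hsin : ((2 * Real.sin (Real.pi * ((j.val:ℝ) - i.val)/r) : ℝ) : ℂ)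
      = (Complex.exp (-θ) - Complex.exp θ) * I := by
    push_cast [Complex.ofReal_sin]
    rw [show Complex.sin (↑Real.pi * ((j.val:ℂ) - i.val)/r) = (Complex.exp (-(↑Real.pi * ((j.val:ℂ) - i.val)/r) * I) - Complex.exp ((↑Real.pi * ((j.val:ℂ) - i.val)/r) * I)) * I / 2 from rfl]
    rw [hθ]; ring_nf
  have key : ∀ x y : ℂ, (Complex.exp x - Complex.exp y) * I * (Complex.exp B * I)
      = Complex.exp (y + B) - Complex.exp (x + B) := by
    intro x y
    calc (Complex.exp x - Complex.exp y) * I * (Complex.exp B * I)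
        = (I*I) * (Complex.exp x * Complex.exp B) - (I*I) * (Complex.exp y * Complex.exp B) := by ring
      _ = _ := by rw [Complex.I_mul_I, ← Complex.exp_add, ← Complex.exp_add]; ring
  rw [show (↑Real.pi * I * (((i.val:ℂ) + j.val + 2)/r + 1/2)) = B + ↑Real.pi * I * (1/2:ℂ) by rw [hB]; ring,
    Complex.exp_add, hIhalf, hsin, key]
  rw [show Complex.exp (2 * ↑Real.pi * Complex.I / ↑r) ^ (j.val+1) = Complex.exp (((j.val+1 : ℕ)) * (2 * ↑Real.pi * Complex.I / ↑r)) by rw [Complex.exp_nat_mul],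
    show Complex.exp (2 * ↑Real.pi * Complex.I / ↑r) ^ (i.val+1) = Complex.exp (((i.val+1 : ℕ)) * (2 * ↑Real.pi * Complex.I / ↑r)) by rw [Complex.exp_nat_mul]]
  rw [show θ + B = ((j.val+1 : ℕ)) * (2 * ↑Real.pi * Complex.I / ↑r) by rw [hθ, hB]; push_cast; field_simp; ring,
    show -θ + B = ((i.val+1 : ℕ)) * (2 * ↑Real.pi * Complex.I / ↑r) by rw [hθ, hB]; push_cast; field_simp; ring]

private lemma schur_sum_eval (r : ℕ) (hr : 2 ≤ r) :
    ∑ i : Fin r, ∑ j ∈ Ioi i, (↑Real.pi * I * (((i.val:ℂ) + j.val + 2)/r + 1/2))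
    = (((r-1)*(3*r+2)/2 : ℕ) : ℂ) * (↑Real.pi * I / 2) := by
  have hr0 : (r:ℂ) ≠ 0 := Nat.cast_ne_zero.mpr (by omega)
  set f : Fin r → Fin r → ℂ := fun i j => ↑Real.pi * I * (((i.val:ℂ) + j.val + 2)/r + 1/2) with hf
  set K : ℂ := ↑Real.pi * I * (((r:ℂ)-1)/2 + 2 + r/2 - 2/r - 1/2) with hK
  set L : ℂ := ↑Real.pi * I * (1 - 2/r) with hL
  have h1 : ∑ i : Fin r, ∑ j ∈ Ioi i, (f j i + f i j) = 2 * ∑ i : Fin r, ∑ j ∈ Ioi i, f i j := by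
    rw [Finset.mul_sum]
    refine Finset.sum_congr rfl fun i _ => ?_
    rw [Finset.mul_sum]
    refine Finset.sum_congr rfl fun j _ => ?_
    simp only [hf]; ring
  have h2 := Finset.sum_sum_Ioi_add_eq_sum_sum_off_diag f
  have hG : ∑ i : Fin r, ((i.val:ℂ)) = r*(r-1)/2 := by
    rw [Fin.sum_univ_eq_sum_range (fun i => (i:ℂ)) r, schur_gaussC]
  have hcompl : ∀ i : Fin r, ∑ j ∈ ({i}ᶜ : Finset (Fin r)), f j i = K + L * (i.val:ℂ) := by
    intro i
    have hc := Finset.sum_compl_add_sum ({i} : Finset (Fin r)) (fun j => f j i)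
    rw [Finset.sum_singleton] at hc
    have hrow : ∑ j : Fin r, f j i
        = (↑Real.pi * I / r) * (r*(r-1)/2) + r * (↑Real.pi * I * (((i.val:ℂ)+2)/r + 1/2)) := by
      rw [show ∑ j : Fin r, f j i
          = ∑ j : Fin r, ((↑Real.pi * I / r) * (j.val:ℂ) + ↑Real.pi * I * (((i.val:ℂ)+2)/r + 1/2))
          from Finset.sum_congr rfl fun j _ => by simp only [hf]; ring]
      rw [Finset.sum_add_distrib, ← Finset.mul_sum, hG, Finset.sum_const, Finset.card_univ,
        Fintype.card_fin, nsmul_eq_mul]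
    have := eq_sub_of_add_eq hc
    rw [hrow] at this
    rw [this]
    simp only [hf, hK, hL]
    field_simp
    ring
  have h2S : 2 * (∑ i : Fin r, ∑ j ∈ Ioi i, f i j) = ↑r * K + L * (↑r*(↑r-1)/2) := by
    rw [← h1, h2]
    have hclosed : ∑ i : Fin r, (K + L * (i.val:ℂ)) = ↑r * K + L * (↑r*(↑r-1)/2) := by
      rw [Finset.sum_add_distrib, Finset.sum_const, Finset.card_univ, Fintype.card_fin,
        nsmul_eq_mul, ← Finset.mul_sum, hG]
    rw [← hclosed]
    apply Finset.sum_congr rfl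
    intro i _
    convert hcompl i using 2
  have he : (((r-1)*(3*r+2)/2 : ℕ) : ℂ) = ((r:ℂ)-1)*(3*r+2)/2 := by
    have h2d : 2 ∣ (r-1)*(3*r+2) := by
      rcases Nat.even_or_odd r with h | h
      · obtain ⟨k, rfl⟩ := h
        exact Dvd.dvd.mul_left (by omega) _
      · obtain ⟨k, rfl⟩ := h
        exact Dvd.dvd.mul_right (by omega) _
    rw [Nat.cast_div h2d (by norm_num)]
    push_cast [Nat.cast_sub (by omega : 1 ≤ r)]
    ring
  have hred : 2 * (∑ i : Fin r, ∑ j ∈ Ioi i, f i j) = (((r-1)*(3*r+2)/2 : ℕ) : ℂ) * (↑Real.pi * I) := by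
    rw [h2S, he, hK, hL]
    field_simp
    ring
  linear_combination hred / 2

private lemma schur_gram (r : ℕ) (hr : 2 ≤ r) :
    (Matrix.of fun m a : Fin r =>
        Complex.exp (2 * Real.pi * Complex.I / r) ^ ((a.val + 1) * m.val)) *
    (Matrix.of fun m a : Fin r =>
        Complex.exp (2 * Real.pi * Complex.I / r) ^ ((a.val + 1) * m.val))ᴴ
    = (r:ℂ) • 1 := by
  have hrne : r ≠ 0 := by omega
  set ζ : ℂ := Complex.exp (2 * Real.pi * Complex.I / r) with hζ
  have hprim : IsPrimitiveRoot ζ r := Complex.isPrimitiveRoot_exp r hrne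
  have hζ0 : ζ ≠ 0 := Complex.exp_ne_zero _
  have hconj : (starRingEnd ℂ) ζ = ζ⁻¹ := by
    rw [hζ, ← Complex.exp_conj]
    rw [show (starRingEnd ℂ) (2 * (Real.pi:ℂ) * Complex.I / r) = -(2 * (Real.pi:ℂ) * Complex.I / r) by
      simp [map_div₀, map_ofNat]; ring]
    rw [Complex.exp_neg]
  ext m n
  simp only [Matrix.mul_apply, Matrix.conjTranspose_apply, Matrix.of_apply, Complex.star_def]
  have hterm : ∀ a : Fin r, ζ ^ ((a.val + 1) * m.val) * (starRingEnd ℂ) (ζ ^ ((a.val + 1) * n.val))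
      = (ζ ^ ((m.val:ℤ) - n.val)) ^ (a.val + 1) := by
    intro a
    rw [map_pow, hconj]
    rw [← zpow_natCast ζ ((a.val + 1) * m.val), ← zpow_natCast ζ⁻¹ ((a.val + 1) * n.val),
      _root_.inv_zpow, ← _root_.zpow_neg, ← zpow_add₀ hζ0,
      ← zpow_natCast (ζ ^ ((m.val:ℤ) - n.val)) (a.val+1), ← _root_.zpow_mul]
    congr 1
    push_cast
    ring
  rw [Finset.sum_congr rfl fun a _ => hterm a]
  by_cases hmn : m = n
  · subst hmn
    simp only [sub_self, zpow_zero, one_pow, Finset.sum_const, Finset.card_univ, Fintype.card_fin,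
      nsmul_eq_mul, mul_one]
    simp [Matrix.one_apply]
  · set w : ℂ := ζ ^ ((m.val:ℤ) - n.val) with hw
    have hw1 : w ≠ 1 := by
      intro h
      rw [hw, hprim.zpow_eq_one_iff_dvd] at h
      have := Int.eq_zero_of_abs_lt_dvd h ?_
      · apply hmn; apply Fin.ext; omega
      · have h1 : m.val < r := m.isLt
        have h2 : n.val < r := n.isLt
        rw [abs_lt]
        constructor <;> [skip; skip] <;> push_cast <;> omega
    have hwr : w ^ r = 1 := by
      rw [hw, ← zpow_natCast (ζ ^ ((m.val:ℤ) - n.val)) r, ← _root_.zpow_mul, mul_comm,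
        _root_.zpow_mul, zpow_natCast, hprim.pow_eq_one, _root_.one_zpow]
    have hsum : ∑ a : Fin r, w ^ (a.val + 1) = 0 := by
      rw [Fin.sum_univ_eq_sum_range (fun a => w ^ (a + 1)) r]
      have : ∀ a, w ^ (a + 1) = w ^ a * w := fun a => by rw [pow_succ]
      rw [Finset.sum_congr rfl fun a _ => this a, ← Finset.sum_mul, geom_sum_eq hw1, hwr]
      simp
    rw [hsum]
    simp [Matrix.one_apply, hmn]

end SchurAux

/-- Schur's evaluation of the Vandermonde determinant on roots of unity:
for `ζ = e^{2πi/r}` with `r ≥ 2`, the determinant of the `r × r` matrix `(ζ^{αm})`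
(rows `m = 0,…,r-1`, columns `α = 1,…,r`) equals `r^{r/2} · i^{(r-1)(3r+2)/2}`,
where `r^{r/2} = (√r)^r`. -/
theorem schur_vandermonde_roots_of_unity (r : ℕ) (hr : 2 ≤ r) :
    Matrix.det (Matrix.of fun m a : Fin r =>
        Complex.exp (2 * Real.pi * Complex.I / r) ^ ((a.val + 1) * m.val))
    = ((Real.sqrt r : ℝ) : ℂ) ^ r * Complex.I ^ ((r - 1) * (3 * r + 2) / 2) := by
  classical
  set e : ℕ := (r - 1) * (3 * r + 2) / 2 with he
  set M : Matrix (Fin r) (Fin r) ℂ := Matrix.of fun m a : Fin r =>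
        Complex.exp (2 * Real.pi * Complex.I / r) ^ ((a.val + 1) * m.val) with hM
  set P : ℝ := ∏ i : Fin r, ∏ j ∈ Finset.Ioi i, (2 * Real.sin (Real.pi * ((j.val:ℝ) - i.val)/r)) with hP
  -- Step 1: det as Vandermonde product
  have hdet : M.det = ∏ i : Fin r, ∏ j ∈ Finset.Ioi i,
      (Complex.exp (2 * ↑Real.pi * Complex.I / ↑r) ^ (j.val+1)
        - Complex.exp (2 * ↑Real.pi * Complex.I / ↑r) ^ (i.val+1)) := by
    have hMt : M = Matrix.transpose
        (Matrix.vandermonde fun a : Fin r => Complex.exp (2 * Real.pi * Complex.I / r) ^ (a.val + 1)) := by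
      ext m a
      simp [hM, Matrix.vandermonde, ← pow_mul]
    rw [hMt, Matrix.det_transpose, Matrix.det_vandermonde]
  -- Step 2: rewrite each factor
  have hdet2 : M.det = (P : ℂ) * Complex.exp
      (∑ i : Fin r, ∑ j ∈ Finset.Ioi i, (↑Real.pi * I * (((i.val:ℂ) + j.val + 2)/r + 1/2))) := by
    rw [hdet]
    refine (Finset.prod_congr rfl fun i _ => Finset.prod_congr rfl fun j hj =>
      schur_factor_eq r hr i j (Finset.mem_Ioi.mp hj)).trans ?_
    rw [hP]
    push_cast
    rw [Complex.exp_sum, ← Finset.prod_mul_distrib]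
    refine Finset.prod_congr rfl fun i _ => ?_
    rw [Complex.exp_sum, ← Finset.prod_mul_distrib]
  have hIe : Complex.exp ((e:ℂ) * (↑Real.pi * I / 2)) = I ^ e := by
    rw [show ((e:ℂ) * (↑Real.pi * I / 2)) = (e:ℕ) * (↑(Real.pi/2) * I) by push_cast; ring,
      Complex.exp_nat_mul, Complex.exp_mul_I]
    push_cast
    simp
  have hDP : M.det = (P : ℂ) * I ^ e := by
    rw [hdet2, schur_sum_eval r hr, ← he, hIe]
  -- Step 3: modulus via Gram matrix
  have hDconj : M.det * (starRingEnd ℂ) M.det = (r:ℂ) ^ r := by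
    have h1 : M.det * (starRingEnd ℂ) M.det = (M * Matrix.conjTranspose M).det := by
      rw [Matrix.det_mul, Matrix.det_conjTranspose]
      rfl
    rw [h1, hM, schur_gram r hr, Matrix.det_smul, Matrix.det_one, mul_one, Fintype.card_fin]
  have hP2 : P ^ 2 = (r:ℝ) ^ r := by
    have h2 : ((P:ℂ) * I ^ e) * (starRingEnd ℂ) ((P:ℂ) * I ^ e) = ((P:ℝ)^2 : ℝ) := by
      rw [map_mul, map_pow, Complex.conj_I, Complex.conj_ofReal]
      push_cast
      calc (P:ℂ) * I ^ e * ((P:ℂ) * (-I) ^ e) = ((P:ℂ))^2 * (I * -I)^e := by rw [mul_pow]; ring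
        _ = ((P:ℂ))^2 := by rw [show I * -I = 1 by simp [Complex.I_mul_I]]; simp
    have h3 : ((P^2 : ℝ) : ℂ) = (((r:ℝ)^r : ℝ) : ℂ) := by
      rw [← h2, ← hDP, hDconj]
      push_cast
      ring
    exact_mod_cast h3
  have hPnn : 0 ≤ P := by
    rw [hP]
    apply Finset.prod_nonneg
    intro i _
    apply Finset.prod_nonneg
    intro j hj
    have hij : i < j := Finset.mem_Ioi.mp hj
    have hr0 : (0:ℝ) < r := by exact_mod_cast Nat.lt_of_lt_of_le Nat.zero_lt_two hr
    have hvle : (i.val:ℝ) ≤ j.val := by exact_mod_cast le_of_lt (Fin.lt_def.mp hij)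
    have h1 : (0:ℝ) ≤ Real.pi * ((j.val:ℝ) - i.val)/r :=
      div_nonneg (mul_nonneg Real.pi_pos.le (sub_nonneg.mpr hvle)) hr0.le
    have hjr : ((j.val:ℝ) - i.val) ≤ r := by
      have : (j.val:ℝ) < r := by exact_mod_cast j.isLt
      have h0i : (0:ℝ) ≤ i.val := by positivity
      linarith
    have h2 : Real.pi * ((j.val:ℝ) - i.val)/r ≤ Real.pi := by
      rw [div_le_iff₀ hr0]
      nlinarith [Real.pi_pos]
    have hs := Real.sin_nonneg_of_nonneg_of_le_pi h1 h2
    linarith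
  -- Step 4: P = (sqrt r)^r
  have hx : ((Real.sqrt r) ^ r)^2 = (r:ℝ)^r := by
    rw [← pow_mul, mul_comm r 2, pow_mul, Real.sq_sqrt (by positivity)]
  have hPsq : P = Real.sqrt r ^ r := by
    calc P = Real.sqrt (P^2) := (Real.sqrt_sq hPnn).symm
      _ = Real.sqrt ((Real.sqrt r ^ r)^2) := by rw [hP2, hx]
      _ = Real.sqrt r ^ r := Real.sqrt_sq (by positivity)
  rw [hDP, hPsq]
  push_cast
  ring
end

section
/- With the notation of the previous statement, the coefficient M_{n,μ,ν} = [u_1^{μ_1}⋯u_n^{μ_n}] m_ν h_{|μ|−|ν|} is given by the explicit product formula M_{n,μ,ν} = (1/z_ν) ∏_{k=0}^{ν_1} ( n − ∑_{i=0}^{k−1} p_i(μ) − ∑_{j=k+1}^{ν_1} p_j(ν) )^{\underline{p_k(ν)}}, where x^{\underline{m}} = x(x−1)⋯(x−m+1) denotes the falling factorial. In particular, M_{n,μ,ν} is a polynomial in n and the multiplicities p_0(μ),...,p_{ν_1−1}(μ). -/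
open Finset MvPolynomial


private lemma count_nested {α : Type*} [Fintype α] [DecidableEq α] :
    ∀ (n : ℕ) (S : Fin n → Finset α), (∀ i j : Fin n, i ≤ j → S i ⊆ S j) →
    (Finset.univ.filter fun σ : Fin n → α =>
        (∀ i, σ i ∈ S i) ∧ Function.Injective σ).card
      = ∏ i : Fin n, ((S i).card - (i : ℕ)) := by
  intro n
  induction n with
  | zero =>
    intro S _
    rw [Finset.filter_true_of_mem, Finset.card_univ]
    · simp
    · intro σ _
      exact ⟨fun i => i.elim0, fun a b _ => a.elim0⟩
  | succ n ih =>
    intro S hS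
    set T := Finset.univ.filter fun σ : Fin (n+1) → α =>
        (∀ i, σ i ∈ S i) ∧ Function.Injective σ with hT
    have hmem : ∀ σ ∈ T, σ 0 ∈ S 0 := by
      intro σ hσ
      exact ((Finset.mem_filter.mp hσ).2.1) 0
    rw [Finset.card_eq_sum_card_fiberwise hmem]
    have key : ∀ a ∈ S 0, (T.filter fun σ => σ 0 = a).card
        = ∏ i : Fin n, ((S i.succ).card - 1 - (i : ℕ)) := by
      intro a ha
      have hsub : ∀ i : Fin n, a ∈ S i.succ := fun i => hS 0 i.succ (Fin.zero_le _) ha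
      have hcard : ∀ i : Fin n, ((S i.succ).erase a).card = (S i.succ).card - 1 :=
        fun i => Finset.card_erase_of_mem (hsub i)
      rw [show (∏ i : Fin n, ((S i.succ).card - 1 - (i : ℕ)))
          = ∏ i : Fin n, (((S i.succ).erase a).card - (i : ℕ)) from
          Finset.prod_congr rfl (fun i _ => by rw [hcard i]),
        ← ih (fun i => (S i.succ).erase a)
        (fun i j hij => Finset.erase_subset_erase a
          (hS i.succ j.succ (Fin.succ_le_succ_iff.mpr hij)))]
      refine Finset.card_bij' (fun σ _ => Fin.tail σ) (fun τ _ => Fin.cons a τ) ?_ ?_ ?_ ?_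
      · intro σ hσ
        obtain ⟨hmemT, h0⟩ := Finset.mem_filter.mp hσ
        obtain ⟨hs, hinj⟩ := (Finset.mem_filter.mp hmemT).2
        refine Finset.mem_filter.mpr ⟨Finset.mem_univ _, fun i => ?_, fun x y hxy => ?_⟩
        · refine Finset.mem_erase.mpr ⟨?_, hs i.succ⟩
          intro hc
          have hc' : σ i.succ = a := hc
          exact (Fin.succ_ne_zero i) (hinj (show σ i.succ = σ 0 by rw [hc', h0]))
        · exact Fin.succ_injective _ (hinj hxy)
      · intro τ hτ
        obtain ⟨_, hs, hinj⟩ := Finset.mem_filter.mp hτ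
        refine Finset.mem_filter.mpr ⟨Finset.mem_filter.mpr ⟨Finset.mem_univ _, ?_, ?_⟩, ?_⟩
        · intro i
          induction i using Fin.cases with
          | zero => simpa using ha
          | succ j => simpa using Finset.mem_of_mem_erase (hs j)
        · rw [Fin.cons_injective_iff]
          refine ⟨?_, hinj⟩
          rintro ⟨j, hj⟩
          exact (Finset.mem_erase.mp (hs j)).1 hj
        · simp
      · intro σ hσ
        have h0 : σ 0 = a := (Finset.mem_filter.mp hσ).2
        show Fin.cons a (Fin.tail σ) = σ
        conv_lhs => rw [← h0]
        exact Fin.cons_self_tail σ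
      · intro τ _
        simp only [Fin.tail_cons]
    rw [Finset.sum_congr rfl key, Finset.sum_const, smul_eq_mul, Fin.prod_univ_succ]
    simp only [Fin.val_zero, Nat.sub_zero, Fin.val_succ]
    congr 1
    refine Finset.prod_congr rfl fun i _ => ?_
    omega

private lemma count_perm_antitone (n : ℕ) (S : Fin n → Finset (Fin n))
    (hS : ∀ i j : Fin n, i ≤ j → S j ⊆ S i) :
    (Finset.univ.filter fun σ : Equiv.Perm (Fin n) => ∀ i, σ i ∈ S i).card
      = ∏ i : Fin n, ((S i).card - (n - 1 - (i : ℕ))) := by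
  have h1 : (Finset.univ.filter fun σ : Equiv.Perm (Fin n) => ∀ i, σ i ∈ S i).card
      = (Finset.univ.filter fun f : Fin n → Fin n =>
          (∀ i, f i ∈ S (Fin.rev i)) ∧ Function.Injective f).card := by
    refine Finset.card_bij (fun σ _ => ⇑σ ∘ Fin.rev) ?_ ?_ ?_
    · intro σ hσ
      have hσ' := (Finset.mem_filter.mp hσ).2
      exact Finset.mem_filter.mpr ⟨Finset.mem_univ _, fun i => hσ' (Fin.rev i),
        σ.injective.comp Fin.rev_injective⟩
    · intro σ hσ τ hτ h
      refine Equiv.ext fun i => ?_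
      have := congrFun h (Fin.rev i)
      simpa [Fin.rev_rev] using this
    · intro f hf
      obtain ⟨_, hfS, hfi⟩ := Finset.mem_filter.mp hf
      have hbij : Function.Bijective (f ∘ Fin.rev) :=
        Finite.injective_iff_bijective.mp (hfi.comp Fin.rev_injective)
      refine ⟨Equiv.ofBijective _ hbij, Finset.mem_filter.mpr ⟨Finset.mem_univ _, fun i => ?_⟩, ?_⟩
      · simpa [Equiv.ofBijective, Fin.rev_rev] using hfS (Fin.rev i)
      · funext i
        simp [Equiv.ofBijective, Fin.rev_rev]
  rw [h1, count_nested n (fun i => S (Fin.rev i))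
    (fun i j hij => hS (Fin.rev j) (Fin.rev i) (Fin.rev_le_rev.mpr hij))]
  have := Equiv.prod_comp (Fin.revPerm (n := n)) (fun i => (S i).card - (n - 1 - (i : ℕ)))
  rw [← this]
  refine Finset.prod_congr rfl fun i _ => ?_
  have hi : (i : ℕ) < n := i.isLt
  simp only [Fin.revPerm_apply]
  congr 1
  rw [Fin.val_rev]
  clear this h1
  omega


private lemma prod_range_group (f : ℕ → ℕ) (A : ℕ → ℕ) (hA : ∀ k, A (k + 1) ≤ A k) :
    ∀ K : ℕ, (∏ k ∈ Finset.range K, ∏ i ∈ Finset.Ico (A (k + 1)) (A k), f i)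
        * ∏ i ∈ Finset.range (A K), f i
      = ∏ i ∈ Finset.range (A 0), f i := by
  intro K
  induction K with
  | zero => simp
  | succ K ih =>
    rw [← ih, Finset.prod_range_succ, mul_assoc]
    congr 1
    rw [Finset.range_eq_Ico, mul_comm, Finset.range_eq_Ico]
    exact Finset.prod_Ico_consecutive f (Nat.zero_le _) (hA K)

private lemma inner_eval (a b q n : ℕ) (hab : a ≤ b) (hbn : b ≤ n) (hqa : q ≤ a) :
    ∏ i ∈ Finset.Ico a b, (n - q - (n - 1 - i)) = (b - q).descFactorial (b - a) := by
  rw [Nat.descFactorial_eq_prod_range, Finset.prod_Ico_eq_prod_range,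
    ← Finset.prod_range_reflect (fun t => b - q - t) (b - a)]
  refine Finset.prod_congr rfl fun t ht => ?_
  have ht' : t < b - a := Finset.mem_range.mp ht
  omega

private lemma num_id (K : ℕ) (A B : ℕ → ℕ) (hBA : ∀ k, B k ≤ A k)
    (hA : ∀ k, A (k + 1) ≤ A k) (hB : ∀ k, B (k + 1) ≤ B k)
    (h0 : A 0 = B 0) (hK : A K = 0) (hBK : B K = 0) :
    ∏ k ∈ Finset.range K, (A k - B (k + 1)).descFactorial (A k - A (k + 1))
      = ∏ k ∈ Finset.range K, (A k - B (k + 1)).descFactorial (B k - B (k + 1)) := by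
  have e1 : (∏ k ∈ Finset.range K, (A k - B (k + 1)).descFactorial (A k - A (k + 1)))
      * ∏ k ∈ Finset.range K, Nat.factorial (A (k + 1) - B (k + 1))
      = ∏ k ∈ Finset.range K, Nat.factorial (A k - B (k + 1)) := by
    rw [← Finset.prod_mul_distrib]
    refine Finset.prod_congr rfl fun k _ => ?_
    have h1 : A k - A (k + 1) ≤ A k - B (k + 1) := by
      have := hBA (k + 1); omega
    have h2 : (A k - B (k + 1)) - (A k - A (k + 1)) = A (k + 1) - B (k + 1) := by
      have := hBA (k + 1); have := hA k; omega
    rw [mul_comm, ← h2, Nat.factorial_mul_descFactorial h1]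
  have e2 : (∏ k ∈ Finset.range K, (A k - B (k + 1)).descFactorial (B k - B (k + 1)))
      * ∏ k ∈ Finset.range K, Nat.factorial (A k - B k)
      = ∏ k ∈ Finset.range K, Nat.factorial (A k - B (k + 1)) := by
    rw [← Finset.prod_mul_distrib]
    refine Finset.prod_congr rfl fun k _ => ?_
    have h1 : B k - B (k + 1) ≤ A k - B (k + 1) := by
      have := hBA k; have := hB k; omega
    have h2 : (A k - B (k + 1)) - (B k - B (k + 1)) = A k - B k := by
      have := hBA k; have := hB k; omega
    rw [mul_comm, ← h2, Nat.factorial_mul_descFactorial h1]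
  have e3 : (∏ k ∈ Finset.range K, Nat.factorial (A (k + 1) - B (k + 1)))
      = ∏ k ∈ Finset.range K, Nat.factorial (A k - B k) := by
    have s1 := Finset.prod_range_succ' (fun k => Nat.factorial (A k - B k)) K
    have s2 := Finset.prod_range_succ (fun k => Nat.factorial (A k - B k)) K
    rw [s2] at s1
    simp only [h0, Nat.sub_self, Nat.factorial_zero, mul_one, hK, hBK] at s1
    exact s1.symm
  have hpos : 0 < ∏ k ∈ Finset.range K, Nat.factorial (A k - B k) :=
    Finset.prod_pos fun k _ => Nat.factorial_pos _
  apply Nat.eq_of_mul_eq_mul_right hpos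
  rw [e2, ← e1, e3]


private lemma prod_monomial (n : ℕ) (e : Fin n → ℕ) :
    (∏ i : Fin n, (MvPolynomial.X i : MvPolynomial (Fin n) ℚ) ^ e i)
      = MvPolynomial.monomial (Finsupp.equivFunOnFinite.symm e) (1 : ℚ) := by
  have h1 : ∀ (s : Finset (Fin n)) (d : Fin n → (Fin n →₀ ℕ)),
      (∏ i ∈ s, (MvPolynomial.monomial (d i) (1 : ℚ)))
        = MvPolynomial.monomial (∑ i ∈ s, d i) (1 : ℚ) := by
    intro s d
    induction s using Finset.cons_induction with
    | empty => simp
    | cons a s ha ih =>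
      rw [Finset.prod_cons, Finset.sum_cons, ih, MvPolynomial.monomial_mul, one_mul]
  calc (∏ i : Fin n, (MvPolynomial.X i : MvPolynomial (Fin n) ℚ) ^ e i)
      = ∏ i : Fin n, MvPolynomial.monomial (Finsupp.single i (e i)) (1 : ℚ) := by
        refine Finset.prod_congr rfl fun i _ => ?_
        rw [MvPolynomial.X_pow_eq_monomial]
    _ = MvPolynomial.monomial (∑ i, Finsupp.single i (e i)) (1 : ℚ) := h1 _ _
    _ = MvPolynomial.monomial (Finsupp.equivFunOnFinite.symm e) (1 : ℚ) := by
        have hsum : (∑ i, Finsupp.single i (e i)) = Finsupp.equivFunOnFinite.symm e := by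
          ext j
          rw [Finsupp.finset_sum_apply]
          simp [Finsupp.single_apply]
        rw [hsum]

private lemma coeff_eq_card (n : ℕ) (μ ν : Fin n → ℕ) (hw : ∑ i, ν i ≤ ∑ i, μ i) :
    MvPolynomial.coeff (Finsupp.equivFunOnFinite.symm μ)
      ((∑ σ : Equiv.Perm (Fin n), ∏ i : Fin n,
          (MvPolynomial.X i : MvPolynomial (Fin n) ℚ) ^ ν (σ i)) *
        ∑ k ∈ Finset.filter (fun k => ∑ i, k i = ∑ i, μ i - ∑ i, ν i)
            (Fintype.piFinset fun _ : Fin n => Finset.range (∑ i, μ i - ∑ i, ν i + 1)),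
          ∏ i : Fin n, (MvPolynomial.X i : MvPolynomial (Fin n) ℚ) ^ k i)
    = (((Finset.univ.filter fun σ : Equiv.Perm (Fin n) =>
          ∀ i, ν (σ i) ≤ μ i).card : ℕ) : ℚ) := by
  set d : ℕ := ∑ i, μ i - ∑ i, ν i with hd
  set D : Finset (Fin n → ℕ) := Finset.filter (fun k => ∑ i, k i = d)
      (Fintype.piFinset fun _ : Fin n => Finset.range (d + 1)) with hD
  rw [Finset.sum_mul_sum, MvPolynomial.coeff_sum]
  have hterm : ∀ σ : Equiv.Perm (Fin n),
      MvPolynomial.coeff (Finsupp.equivFunOnFinite.symm μ)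
        (∑ k ∈ D, (∏ i : Fin n, (MvPolynomial.X i : MvPolynomial (Fin n) ℚ) ^ ν (σ i)) *
          ∏ i : Fin n, (MvPolynomial.X i : MvPolynomial (Fin n) ℚ) ^ k i)
      = if (∀ i, ν (σ i) ≤ μ i) then (1 : ℚ) else 0 := by
    intro σ
    rw [MvPolynomial.coeff_sum]
    have hterm2 : ∀ k : Fin n → ℕ,
        MvPolynomial.coeff (Finsupp.equivFunOnFinite.symm μ)
          ((∏ i : Fin n, (MvPolynomial.X i : MvPolynomial (Fin n) ℚ) ^ ν (σ i)) *
            ∏ i : Fin n, (MvPolynomial.X i : MvPolynomial (Fin n) ℚ) ^ k i)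
        = if (∀ i, ν (σ i) + k i = μ i) then (1 : ℚ) else 0 := by
      intro k
      rw [prod_monomial n (fun i => ν (σ i)), prod_monomial n k,
        MvPolynomial.monomial_mul, MvPolynomial.coeff_monomial, one_mul]
      congr 1
      simp only [eq_iff_iff]
      constructor
      · intro h i
        have := DFunLike.congr_fun h i
        simpa using this
      · intro h
        ext i
        simpa using h i
    rw [Finset.sum_congr rfl fun k _ => hterm2 k]
    by_cases hσ : ∀ i, ν (σ i) ≤ μ i
    · rw [if_pos hσ]
      have hsum : ∑ i, (μ i - ν (σ i)) = d := by
        have h1 : ∑ i, (μ i - ν (σ i)) + ∑ i, ν (σ i) = ∑ i, μ i := by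
          rw [← Finset.sum_add_distrib]
          refine Finset.sum_congr rfl fun i _ => ?_
          have := hσ i
          omega
        have h2 : ∑ i, ν (σ i) = ∑ i, ν i := Equiv.sum_comp σ ν
        omega
      have hmem : (fun i => μ i - ν (σ i)) ∈ D := by
        refine Finset.mem_filter.mpr ⟨Fintype.mem_piFinset.mpr fun i => ?_, hsum⟩
        rw [Finset.mem_range]
        show μ i - ν (σ i) < d + 1
        have hle : μ i - ν (σ i) ≤ ∑ j, (μ j - ν (σ j)) :=
          Finset.single_le_sum (f := fun j => μ j - ν (σ j))
            (fun j _ => Nat.zero_le _) (Finset.mem_univ i)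
        omega
      rw [Finset.sum_eq_single_of_mem _ hmem]
      · rw [if_pos]
        intro i
        show ν (σ i) + (μ i - ν (σ i)) = μ i
        have := hσ i
        omega
      · intro b hb hbne
        rw [if_neg]
        intro hc
        apply hbne
        funext i
        have := hc i
        omega
    · rw [if_neg hσ]
      refine Finset.sum_eq_zero fun k _ => ?_
      rw [if_neg]
      intro hc
      apply hσ
      intro i
      have := hc i
      omega
  rw [Finset.sum_congr rfl fun σ _ => hterm σ, Finset.sum_boole]


private def Ac (n : ℕ) (μ : Fin n → ℕ) (k : ℕ) : ℕ :=
  (Finset.univ.filter fun i => k ≤ μ i).card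

private lemma Ac_anti (n : ℕ) (μ : Fin n → ℕ) (k : ℕ) : Ac n μ (k + 1) ≤ Ac n μ k :=
  Finset.card_le_card fun i hi => Finset.mem_filter.mpr
    ⟨Finset.mem_univ _, by have := (Finset.mem_filter.mp hi).2; omega⟩

private lemma Ac_zero (n : ℕ) (μ : Fin n → ℕ) : Ac n μ 0 = n := by
  unfold Ac
  rw [Finset.filter_true_of_mem fun i _ => Nat.zero_le _, Finset.card_univ, Fintype.card_fin]

private lemma Ac_le (n : ℕ) (μ : Fin n → ℕ) (k : ℕ) : Ac n μ k ≤ n := by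
  have := Finset.card_filter_le (Finset.univ : Finset (Fin n)) (fun i => k ≤ μ i)
  simpa [Ac] using this

private lemma Ac_eq_zero (n : ℕ) (μ : Fin n → ℕ) (k : ℕ) (h : ∀ i, μ i < k) :
    Ac n μ k = 0 := by
  unfold Ac
  rw [Finset.card_eq_zero, Finset.filter_eq_empty_iff]
  intro i _
  have := h i
  omega

-- multiplicity as difference
private lemma card_level (n : ℕ) (μ : Fin n → ℕ) (k : ℕ) :
    (Finset.univ.filter fun i => μ i = k).card = Ac n μ k - Ac n μ (k + 1) := by
  have hsub : (Finset.univ.filter fun i : Fin n => k + 1 ≤ μ i)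
      ⊆ Finset.univ.filter fun i => k ≤ μ i :=
    fun i hi => Finset.mem_filter.mpr
      ⟨Finset.mem_univ _, by have := (Finset.mem_filter.mp hi).2; omega⟩
  have hset : (Finset.univ.filter fun i : Fin n => μ i = k)
      = (Finset.univ.filter fun i => k ≤ μ i) \ (Finset.univ.filter fun i => k + 1 ≤ μ i) := by
    ext i
    simp only [Finset.mem_filter, Finset.mem_sdiff, Finset.mem_univ, true_and]
    omega
  rw [hset, Finset.card_sdiff_of_subset hsub]
  rfl

-- membership characterization for antitone μ
private lemma mem_Ac (n : ℕ) (μ : Fin n → ℕ) (hμ : Antitone μ) (k : ℕ) (i : Fin n) :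
    k ≤ μ i ↔ (i : ℕ) < Ac n μ k := by
  unfold Ac
  constructor
  · intro h
    have hsub : Finset.Iic i ⊆ Finset.univ.filter fun j => k ≤ μ j := by
      intro j hj
      have hj' : j ≤ i := Finset.mem_Iic.mp hj
      exact Finset.mem_filter.mpr ⟨Finset.mem_univ _, le_trans h (hμ hj')⟩
    have := Finset.card_le_card hsub
    rw [Fin.card_Iic] at this
    omega
  · intro h
    by_contra hc
    have hsub : (Finset.univ.filter fun j => k ≤ μ j) ⊆ Finset.Iio i := by
      intro j hj
      have hj' := (Finset.mem_filter.mp hj).2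
      rw [Finset.mem_Iio]
      by_contra hji
      exact hc (le_trans hj' (hμ (not_lt.mp hji)))
    have := Finset.card_le_card hsub
    rw [Fin.card_Iio] at this
    have : Ac n μ k ≤ (i : ℕ) := this
    omega

private lemma main_count (n : ℕ) (hn : 1 ≤ n) (μ ν : Fin n → ℕ)
    (hμ : Antitone μ) (hν : Antitone ν) (M : ℕ) (hM : ∀ j, ν j ≤ M) :
    (((Finset.univ.filter fun σ : Equiv.Perm (Fin n) => ∀ i, ν (σ i) ≤ μ i).card : ℕ) : ℚ)
      = ∏ k ∈ Finset.range (M + 1),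
          ∏ t ∈ Finset.range ((Finset.univ.filter fun j => ν j = k).card),
            (((Finset.univ.filter fun i => k ≤ μ i).card : ℚ)
              - ((Finset.univ.filter fun j => k + 1 ≤ ν j).card : ℚ) - (t : ℚ)) := by
  have hcl : ∀ k, (Finset.univ.filter fun j => ν j = k).card = Ac n ν k - Ac n ν (k + 1) :=
    card_level n ν
  show _ = ∏ k ∈ Finset.range (M + 1),
      ∏ t ∈ Finset.range ((Finset.univ.filter fun j => ν j = k).card),
        ((Ac n μ k : ℚ) - (Ac n ν (k + 1) : ℚ) - (t : ℚ))
  simp only [hcl]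
  have hBM : ∀ k, M + 1 ≤ k → Ac n ν k = 0 := fun k hk =>
    Ac_eq_zero n ν k (fun j => by have := hM j; omega)
  by_cases hall : ∀ k, Ac n ν k ≤ Ac n μ k
  · -- Hall condition holds
    -- Step 1: permutation count as a product over rows
    set S : Fin n → Finset (Fin n) := fun i => Finset.univ.filter fun j => ν j ≤ μ i with hSdef
    have hfilter : (Finset.univ.filter fun σ : Equiv.Perm (Fin n) => ∀ i, ν (σ i) ≤ μ i)
        = Finset.univ.filter fun σ : Equiv.Perm (Fin n) => ∀ i, σ i ∈ S i := by
      refine Finset.filter_congr fun σ _ => ?_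
      simp [hSdef]
    have hS : ∀ i j : Fin n, i ≤ j → S j ⊆ S i := by
      intro i j hij x hx
      have := (Finset.mem_filter.mp hx).2
      exact Finset.mem_filter.mpr ⟨Finset.mem_univ _, le_trans this (hμ hij)⟩
    have hScard : ∀ i, (S i).card = n - Ac n ν (μ i + 1) := by
      intro i
      have hset : S i = Finset.univ \ (Finset.univ.filter fun j => μ i + 1 ≤ ν j) := by
        ext j
        simp only [hSdef, Finset.mem_filter, Finset.mem_sdiff, Finset.mem_univ, true_and]
        omega
      rw [hset, Finset.card_sdiff_of_subset (Finset.filter_subset _ _), Finset.card_univ,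
        Fintype.card_fin]
      rfl
    rw [hfilter, count_perm_antitone n S hS]
    -- Step 2: convert to a range product and group by the value of μ
    set K : ℕ := M + μ ⟨0, hn⟩ + 1 with hKdef
    have hμtop : ∀ i : Fin n, μ i ≤ μ ⟨0, hn⟩ := fun i =>
      hμ (show (⟨0, hn⟩ : Fin n) ≤ i from Fin.mk_le_of_le_val (Nat.zero_le _))
    have hAK : Ac n μ (K + 1) = 0 :=
      Ac_eq_zero n μ (K + 1) (fun i => by have := hμtop i; omega)
    have hBK : Ac n ν (K + 1) = 0 := hBM _ (by omega)
    set f : ℕ → ℕ := fun i =>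
      if h : i < n then n - Ac n ν (μ ⟨i, h⟩ + 1) - (n - 1 - i) else 1 with hfdef
    have hprodf : ∏ i : Fin n, ((S i).card - (n - 1 - (i : ℕ))) = ∏ i ∈ Finset.range n, f i := by
      rw [← Fin.prod_univ_eq_prod_range f n]
      refine Finset.prod_congr rfl fun i _ => ?_
      rw [hScard i]
      simp [hfdef, i.isLt]
    have hgroup := prod_range_group f (Ac n μ) (Ac_anti n μ) (K + 1)
    rw [hAK] at hgroup
    simp only [Finset.range_zero, Finset.prod_empty, mul_one] at hgroup
    have hinner : ∀ k ∈ Finset.range (K + 1),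
        ∏ i ∈ Finset.Ico (Ac n μ (k + 1)) (Ac n μ k), f i
          = (Ac n μ k - Ac n ν (k + 1)).descFactorial (Ac n μ k - Ac n μ (k + 1)) := by
      intro k _
      have heq : ∀ i ∈ Finset.Ico (Ac n μ (k + 1)) (Ac n μ k),
          f i = n - Ac n ν (k + 1) - (n - 1 - i) := by
        intro i hi
        obtain ⟨hi1, hi2⟩ := Finset.mem_Ico.mp hi
        have hin : i < n := lt_of_lt_of_le hi2 (Ac_le n μ k)
        have hval : μ ⟨i, hin⟩ = k := by
          have hv : ((⟨i, hin⟩ : Fin n) : ℕ) = i := rfl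
          have h1 : k ≤ μ ⟨i, hin⟩ := (mem_Ac n μ hμ k ⟨i, hin⟩).mpr (by rw [hv]; exact hi2)
          have h2 : ¬ (k + 1 ≤ μ ⟨i, hin⟩) := fun hc => by
            have h3 := (mem_Ac n μ hμ (k + 1) ⟨i, hin⟩).mp hc
            rw [hv] at h3
            omega
          omega
        simp only [hfdef, dif_pos hin, hval]
      rw [Finset.prod_congr rfl heq]
      have h1 : Ac n ν (k + 1) ≤ Ac n μ (k + 1) := hall (k + 1)
      exact inner_eval (Ac n μ (k + 1)) (Ac n μ k) (Ac n ν (k + 1)) n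
        (Ac_anti n μ k) (Ac_le n μ k) h1
    rw [Ac_zero] at hgroup
    rw [hprodf, ← hgroup, Finset.prod_congr rfl hinner,
      num_id (K + 1) (Ac n μ) (Ac n ν) hall (Ac_anti n μ) (Ac_anti n ν)
        (by rw [Ac_zero, Ac_zero]) hAK hBK]
    -- Step 3: cast to ℚ and restrict the range
    rw [← Finset.prod_range_mul_prod_Ico
      (fun k => (Ac n μ k - Ac n ν (k + 1)).descFactorial (Ac n ν k - Ac n ν (k + 1)))
      (show M + 1 ≤ K + 1 by omega)]
    have htriv : ∀ k ∈ Finset.Ico (M + 1) (K + 1),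
        (Ac n μ k - Ac n ν (k + 1)).descFactorial (Ac n ν k - Ac n ν (k + 1)) = 1 := by
      intro k hk
      obtain ⟨hk1, _⟩ := Finset.mem_Ico.mp hk
      rw [hBM k hk1, hBM (k + 1) (by omega)]
      rfl
    rw [Finset.prod_congr rfl htriv, Finset.prod_const_one, mul_one, Nat.cast_prod]
    refine Finset.prod_congr rfl fun k _ => ?_
    rw [Nat.descFactorial_eq_prod_range, Nat.cast_prod]
    refine Finset.prod_congr rfl fun t ht => ?_
    have ht' : t < Ac n ν k - Ac n ν (k + 1) := Finset.mem_range.mp ht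
    have h1 : Ac n ν (k + 1) ≤ Ac n ν k := Ac_anti n ν k
    have h2 : Ac n ν k ≤ Ac n μ k := hall k
    have h3 : Ac n ν (k + 1) ≤ Ac n μ k := le_trans h1 h2
    have h4 : t ≤ Ac n μ k - Ac n ν (k + 1) := by omega
    rw [Nat.cast_sub h4, Nat.cast_sub h3]
  · -- Hall condition fails: both sides are zero
    push_neg at hall
    obtain ⟨k0, hk0⟩ := hall
    have hk0M : k0 ≤ M := by
      by_contra hc
      rw [hBM k0 (by omega)] at hk0
      omega
    set P : ℕ → Prop := fun k => Ac n μ k < Ac n ν k with hPdef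
    haveI hdec : DecidablePred P := fun k => by unfold P; infer_instance
    set ks : ℕ := Nat.findGreatest P M with hksdef
    have hstar' : P ks := Nat.findGreatest_spec (P := P) hk0M (show P k0 from hk0)
    have hstar : Ac n μ ks < Ac n ν ks := hstar'
    have hksM : ks ≤ M := Nat.findGreatest_le M
    have hnext : Ac n ν (ks + 1) ≤ Ac n μ (ks + 1) := by
      by_cases hc : ks + 1 ≤ M
      · have := Nat.findGreatest_is_greatest (P := P) (n := M) (k := ks + 1)
          (Nat.lt_succ_self ks) hc
        unfold P at this
        omega
      · rw [hBM (ks + 1) (by omega)]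
        exact Nat.zero_le _
    have hcount : (Finset.univ.filter fun σ : Equiv.Perm (Fin n) =>
        ∀ i, ν (σ i) ≤ μ i).card = 0 := by
      rw [Finset.card_eq_zero, Finset.filter_eq_empty_iff]
      intro σ _ hσ
      have hle : Ac n ν ks ≤ Ac n μ ks := by
        refine Finset.card_le_card_of_injOn (fun j => σ⁻¹ j) ?_ ?_
        · intro j hj
          have hj' := (Finset.mem_filter.mp hj).2
          refine Finset.mem_filter.mpr ⟨Finset.mem_univ _, ?_⟩
          show ks ≤ μ (σ⁻¹ j)
          have h5 := hσ (σ⁻¹ j)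
          rw [show σ (σ⁻¹ j) = j from σ.apply_symm_apply j] at h5
          omega
        · exact (Equiv.injective σ⁻¹).injOn
      omega
    rw [hcount]
    have hzero : (0 : ℚ) = ∏ t ∈ Finset.range (Ac n ν ks - Ac n ν (ks + 1)),
        ((Ac n μ ks : ℚ) - (Ac n ν (ks + 1) : ℚ) - (t : ℚ)) := by
      rw [eq_comm]
      refine Finset.prod_eq_zero (i := Ac n μ ks - Ac n ν (ks + 1)) ?_ ?_
      · rw [Finset.mem_range]
        have h1 : Ac n μ (ks + 1) ≤ Ac n μ ks := Ac_anti n μ ks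
        omega
      · have h3 : Ac n ν (ks + 1) ≤ Ac n μ ks := le_trans hnext (Ac_anti n μ ks)
        rw [Nat.cast_sub h3]
        ring
    rw [Nat.cast_zero]
    rw [eq_comm]
    refine Finset.prod_eq_zero (i := ks) (Finset.mem_range.mpr (by omega)) ?_
    exact hzero.symm


private lemma sum_levels_mu (n : ℕ) (μ : Fin n → ℕ) (k : ℕ) :
    (∑ i ∈ Finset.range k, (Finset.univ.filter fun j => μ j = i).card)
      + (Finset.univ.filter fun i => k ≤ μ i).card = n := by
  have h1 : (Finset.univ.filter fun j : Fin n => μ j < k).card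
      = ∑ i ∈ Finset.range k, ((Finset.univ.filter fun j : Fin n => μ j < k).filter
          fun j => μ j = i).card :=
    Finset.card_eq_sum_card_fiberwise fun j hj =>
      Finset.mem_range.mpr (Finset.mem_filter.mp hj).2
  have h2 : ∀ i ∈ Finset.range k,
      ((Finset.univ.filter fun j : Fin n => μ j < k).filter fun j => μ j = i).card
        = (Finset.univ.filter fun j : Fin n => μ j = i).card := by
    intro i hi
    have hi' := Finset.mem_range.mp hi
    congr 1
    ext j
    simp only [Finset.mem_filter, Finset.mem_univ, true_and]
    omega
  have h3 : (Finset.univ.filter fun j : Fin n => μ j < k).card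
      + (Finset.univ.filter fun j : Fin n => ¬ μ j < k).card = n := by
    rw [Finset.card_filter_add_card_filter_not, Finset.card_univ, Fintype.card_fin]
  have h4 : (Finset.univ.filter fun j : Fin n => ¬ μ j < k)
      = Finset.univ.filter fun j : Fin n => k ≤ μ j := by
    refine Finset.filter_congr fun j _ => ?_
    simp only [eq_iff_iff, not_lt]
  rw [← Finset.sum_congr rfl h2, ← h1]
  rw [h4] at h3
  exact h3

private lemma sum_levels_nu (n : ℕ) (ν : Fin n → ℕ) (M : ℕ) (hM : ∀ j, ν j ≤ M) (k : ℕ) :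
    (∑ j ∈ Finset.Icc (k + 1) M, (Finset.univ.filter fun i => ν i = j).card)
      = (Finset.univ.filter fun j => k + 1 ≤ ν j).card := by
  have h1 : (Finset.univ.filter fun j : Fin n => k + 1 ≤ ν j).card
      = ∑ b ∈ Finset.Icc (k + 1) M, ((Finset.univ.filter fun j : Fin n => k + 1 ≤ ν j).filter
          fun j => ν j = b).card :=
    Finset.card_eq_sum_card_fiberwise fun j hj =>
      Finset.mem_Icc.mpr ⟨(Finset.mem_filter.mp hj).2, hM j⟩
  have h2 : ∀ b ∈ Finset.Icc (k + 1) M,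
      ((Finset.univ.filter fun j : Fin n => k + 1 ≤ ν j).filter fun j => ν j = b).card
        = (Finset.univ.filter fun j : Fin n => ν j = b).card := by
    intro b hb
    obtain ⟨hb1, _⟩ := Finset.mem_Icc.mp hb
    congr 1
    ext j
    simp only [Finset.mem_filter, Finset.mem_univ, true_and]
    omega
  rw [h1, Finset.sum_congr rfl h2]

/-- Explicit product formula (Proposition B.1): the coefficient
`M_{n,μ,ν} = [u₁^{μ₁}⋯uₙ^{μₙ}] m_ν h_{|μ|-|ν|}` is given by
`(1/z_ν) ∏_{k=0}^{ν₁} ( n - ∑_{i<k} p_i(μ) - ∑_{j=k+1}^{ν₁} p_j(ν) )^{\underline{p_k(ν)}}`,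
where `x^{\underline m} = x(x-1)⋯(x-m+1)` is the falling factorial (written as a product),
`p_k(λ)` is the multiplicity of the part `k` in `λ` and `z_ν = ∏ₖ p_k(ν)!`.
In particular `M_{n,μ,ν}` is a polynomial in `n` and `p₀(μ),…,p_{ν₁-1}(μ)`. -/
theorem coeff_monomial_mul_complete_product_formula
    (n : ℕ) (hn : 1 ≤ n) (μ ν : Fin n → ℕ)
    (hμ : Antitone μ) (hν : Antitone ν) (hw : ∑ i, ν i ≤ ∑ i, μ i) :
    MvPolynomial.coeff (Finsupp.equivFunOnFinite.symm μ)
      (MvPolynomial.C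
          (((∏ k ∈ Finset.range (ν ⟨0, hn⟩ + 1),
              Nat.factorial ((Finset.univ.filter fun i => ν i = k).card) : ℕ) : ℚ))⁻¹ *
        (∑ σ : Equiv.Perm (Fin n), ∏ i : Fin n,
            (MvPolynomial.X i : MvPolynomial (Fin n) ℚ) ^ ν (σ i)) *
        ∑ k ∈ Finset.filter (fun k => ∑ i, k i = ∑ i, μ i - ∑ i, ν i)
            (Fintype.piFinset fun _ : Fin n => Finset.range (∑ i, μ i - ∑ i, ν i + 1)),
          ∏ i : Fin n, (MvPolynomial.X i : MvPolynomial (Fin n) ℚ) ^ k i)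
    = (((∏ k ∈ Finset.range (ν ⟨0, hn⟩ + 1),
          Nat.factorial ((Finset.univ.filter fun i => ν i = k).card) : ℕ) : ℚ))⁻¹ *
      ∏ k ∈ Finset.range (ν ⟨0, hn⟩ + 1),
        ∏ t ∈ Finset.range ((Finset.univ.filter fun i => ν i = k).card),
          ((n : ℚ)
            - ∑ i ∈ Finset.range k, ((Finset.univ.filter fun j => μ j = i).card : ℚ)
            - ∑ j ∈ Finset.Icc (k + 1) (ν ⟨0, hn⟩),
                ((Finset.univ.filter fun i => ν i = j).card : ℚ)
            - (t : ℚ)) := by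
  have hM : ∀ j : Fin n, ν j ≤ ν ⟨0, hn⟩ := fun j =>
    hν (show (⟨0, hn⟩ : Fin n) ≤ j from Fin.mk_le_of_le_val (Nat.zero_le _))
  rw [mul_assoc, MvPolynomial.coeff_C_mul, coeff_eq_card n μ ν hw,
    main_count n hn μ ν hμ hν (ν ⟨0, hn⟩) hM]
  congr 1
  refine Finset.prod_congr rfl fun k hk => Finset.prod_congr rfl fun t ht => ?_
  have h1 := sum_levels_mu n μ k
  have h2 := sum_levels_nu n ν (ν ⟨0, hn⟩) hM k
  have h1' : (∑ i ∈ Finset.range k, (((Finset.univ.filter fun j => μ j = i).card : ℕ) : ℚ))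
      = (n : ℚ) - ((Finset.univ.filter fun i => k ≤ μ i).card : ℚ) := by
    have := congrArg (fun m : ℕ => (m : ℚ)) h1
    push_cast at this
    linarith
  have h2' : (∑ j ∈ Finset.Icc (k + 1) (ν ⟨0, hn⟩),
        (((Finset.univ.filter fun i => ν i = j).card : ℕ) : ℚ))
      = ((Finset.univ.filter fun j => k + 1 ≤ ν j).card : ℚ) := by
    have := congrArg (fun m : ℕ => (m : ℚ)) h2
    push_cast at this
    exact this
  rw [h1', h2']
  ring
end

section
/- Special cases of the coefficient formula: for a partition μ with n parts (zero parts allowed) and m ≤ n, the coefficient of u_1^{μ_1}⋯u_n^{μ_n} in m_{(1^m,0^{n−m})} · h_{|μ|−m} equals (n − p_0(μ))^{\underline{m}} / m!, and the coefficient of u_1^{μ_1}⋯u_n^{μ_n} in m_{(2,1^m,0^{n−m−1})} · h_{|μ|−m−2} equals (n − p_0(μ) − 1)^{\underline{m}} · (n − p_0(μ) − p_1(μ)) / m!. -/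
open Finset MvPolynomial

section Helpers

lemma prodX {n : ℕ} (f : Fin n → ℕ) :
    ∏ i, (X i : MvPolynomial (Fin n) ℚ) ^ f i
      = monomial (Finsupp.equivFunOnFinite.symm f) 1 := by
  rw [← prod_X_pow_eq_monomial, ← Finset.prod_subset (Finset.subset_univ _)]
  · rfl
  · intro i _ hi
    have : (Finsupp.equivFunOnFinite.symm f) i = 0 := Finsupp.notMem_support_iff.1 hi
    rw [show f i = 0 from this, pow_zero]

lemma descCast (a m : ℕ) : ∏ t ∈ range m, ((a:ℚ) - t) = a.descFactorial m := by
  induction m with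
  | zero => simp
  | succ m ih =>
    rw [Finset.prod_range_succ, ih, Nat.descFactorial_succ]
    rcases le_or_gt a m with h | h
    · rw [Nat.sub_eq_zero_of_le h]
      rcases eq_or_lt_of_le h with h | h
      · rw [← h]; push_cast; ring
      · rw [Nat.descFactorial_eq_zero_iff_lt.2 h]; push_cast; ring
    · push_cast [Nat.cast_sub h.le]
      ring

lemma symm_add_eq {n : ℕ} (a b c : Fin n → ℕ) :
    (Finsupp.equivFunOnFinite.symm a + Finsupp.equivFunOnFinite.symm b
      = Finsupp.equivFunOnFinite.symm c) ↔ ∀ i, a i + b i = c i := by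
  rw [DFunLike.ext_iff]
  apply forall_congr'
  intro i
  simp [Finsupp.add_apply]

lemma coeff_main {n : ℕ} (μ : Fin n → ℕ) (e : Equiv.Perm (Fin n) → Fin n → ℕ) (w d : ℕ)
    (he : ∀ σ, ∑ i, e σ i = w) (hd : ∑ i, μ i = w + d) :
    MvPolynomial.coeff (Finsupp.equivFunOnFinite.symm μ)
      ((∑ σ : Equiv.Perm (Fin n), ∏ i, (X i : MvPolynomial (Fin n) ℚ) ^ e σ i) *
       ∑ k ∈ Finset.filter (fun k => ∑ i, k i = d)
           (Fintype.piFinset fun _ : Fin n => Finset.range (d + 1)),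
         ∏ i, (X i : MvPolynomial (Fin n) ℚ) ^ k i)
    = ((univ.filter fun σ : Equiv.Perm (Fin n) => ∀ i, e σ i ≤ μ i).card : ℚ) := by
  classical
  simp_rw [prodX]
  rw [Finset.sum_mul_sum]
  simp_rw [MvPolynomial.monomial_mul, one_mul, MvPolynomial.coeff_sum,
    MvPolynomial.coeff_monomial]
  have key : ∀ σ : Equiv.Perm (Fin n),
      (∑ k ∈ Finset.filter (fun k => ∑ i, k i = d)
           (Fintype.piFinset fun _ : Fin n => Finset.range (d + 1)),
        if Finsupp.equivFunOnFinite.symm (e σ) + Finsupp.equivFunOnFinite.symm k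
            = Finsupp.equivFunOnFinite.symm μ then (1:ℚ) else 0)
      = if (∀ i, e σ i ≤ μ i) then (1:ℚ) else 0 := by
    intro σ
    by_cases h : ∀ i, e σ i ≤ μ i
    · rw [if_pos h]
      have hmem : (fun i => μ i - e σ i) ∈ Finset.filter (fun k => ∑ i, k i = d)
          (Fintype.piFinset fun _ : Fin n => Finset.range (d + 1)) := by
        have hsum : ∑ i, (μ i - e σ i) = d := by
          have h1 : ∑ i, (μ i - e σ i) + ∑ i, e σ i = ∑ i, μ i := by
            rw [← Finset.sum_add_distrib]
            exact Finset.sum_congr rfl fun i _ => Nat.sub_add_cancel (h i)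
          rw [he σ] at h1
          omega
        refine Finset.mem_filter.2 ⟨Fintype.mem_piFinset.2 fun i => ?_, hsum⟩
        rw [Finset.mem_range]
        have := Finset.single_le_sum (f := fun i => μ i - e σ i)
          (fun i _ => Nat.zero_le _) (Finset.mem_univ i)
        have h2 : μ i - e σ i ≤ ∑ x : Fin n, (μ x - e σ x) := this
        omega
      rw [Finset.sum_eq_single (fun i => μ i - e σ i)]
      · rw [if_pos ((symm_add_eq _ _ _).2 fun i => Nat.add_sub_cancel' (h i))]
      · intro k hk hne
        rw [if_neg]
        intro hEq
        exact hne (funext fun i => by have := (symm_add_eq _ _ _).1 hEq i; omega)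
      · intro hmem'; exact absurd hmem hmem'
    · rw [if_neg h, Finset.sum_eq_zero]
      intro k hk
      rw [if_neg]
      intro hEq
      exact h fun i => le_of_add_le_left (le_of_eq ((symm_add_eq _ _ _).1 hEq i))
  calc (∑ σ : Equiv.Perm (Fin n), ∑ k ∈ _, _) = ∑ σ : Equiv.Perm (Fin n),
      (if (∀ i, e σ i ≤ μ i) then (1:ℚ) else 0) := Finset.sum_congr rfl fun σ _ => key σ
    _ = _ := by rw [Finset.sum_boole]

def Nset (n k : ℕ) (A : Fin k → Finset (Fin n)) : Finset (Fin k → Fin n) :=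
  univ.filter fun f => Function.Injective f ∧ ∀ i, f i ∈ A i

lemma Nset_rec (n k : ℕ) (A : Fin (k+1) → Finset (Fin n)) :
    (Nset n (k+1) A).card = ∑ a ∈ A 0, (Nset n k (fun i => A i.succ \ {a})).card := by
  rw [Finset.card_eq_sum_card_fiberwise (f := fun f => f 0) (t := A 0)
    (fun f hf => ((Finset.mem_filter.1 hf).2.2) 0)]
  refine Finset.sum_congr rfl fun a _ => ?_
  refine Finset.card_nbij' (fun f => f ∘ Fin.succ) (fun g => Fin.cons a g) ?_ ?_ ?_ ?_
  · intro f hf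
    simp only [Finset.mem_coe, Nset, Finset.mem_filter, Finset.mem_univ, true_and] at hf ⊢
    obtain ⟨⟨hinj, hmem⟩, h0⟩ := hf
    refine ⟨fun x y hxy => Fin.succ_injective _ (hinj hxy), fun i => ?_⟩
    simp only [Function.comp_apply, Finset.mem_sdiff, Finset.mem_singleton]
    exact ⟨hmem i.succ, fun h => (Fin.succ_ne_zero i) (hinj (h.trans h0.symm))⟩
  · intro g hg
    simp only [Finset.mem_coe, Nset, Finset.mem_filter, Finset.mem_univ, true_and] at hg ⊢
    obtain ⟨hinj, hmem⟩ := hg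
    have hne : ∀ i, g i ≠ a := fun i h => by
      have := hmem i; rw [h] at this; simp at this
    constructor
    constructor
    · intro x y hxy
      rcases Fin.eq_zero_or_eq_succ x with rfl | ⟨x', rfl⟩ <;>
        rcases Fin.eq_zero_or_eq_succ y with rfl | ⟨y', rfl⟩
      · rfl
      · simp only [Fin.cons_zero, Fin.cons_succ] at hxy
        exact absurd hxy.symm (hne y')
      · simp only [Fin.cons_zero, Fin.cons_succ] at hxy
        exact absurd hxy (hne x')
      · simp only [Fin.cons_succ] at hxy
        rw [hinj hxy]
    · intro i
      rcases Fin.eq_zero_or_eq_succ i with rfl | ⟨i', rfl⟩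
      · simpa using ‹a ∈ A 0›
      · simpa using (Finset.mem_sdiff.1 (hmem i')).1
    · simp
  · intro f hf
    simp only [Finset.mem_coe, Finset.mem_filter] at hf
    funext i
    rcases Fin.eq_zero_or_eq_succ i with rfl | ⟨i', rfl⟩
    · simp [hf.2]
    · simp
  · intro g hg
    funext i
    simp

lemma Nset_zero (n : ℕ) (A : Fin 0 → Finset (Fin n)) : (Nset n 0 A).card = 1 := by
  rw [Nset]
  rw [Finset.filter_true_of_mem (fun f _ => ⟨fun x => x.elim0, fun i => i.elim0⟩)]
  simp [Finset.card_univ]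

lemma Nset_const (n m : ℕ) (A : Finset (Fin n)) :
    (Nset n m (fun _ => A)).card = A.card.descFactorial m := by
  induction m generalizing A with
  | zero => simpa using Nset_zero n _
  | succ m ih =>
    rw [Nset_rec]
    have : ∀ a ∈ A, (Nset n m (fun i => A \ {a})).card = (A.card - 1).descFactorial m := by
      intro a ha
      rw [ih, Finset.sdiff_singleton_eq_erase, Finset.card_erase_of_mem ha]
    rw [Finset.sum_congr rfl this, Finset.sum_const, smul_eq_mul]
    rcases A.eq_empty_or_nonempty with rfl | ⟨a, ha⟩
    · simp
    · obtain ⟨b, hb⟩ : ∃ b, A.card = b + 1 :=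
        ⟨A.card - 1, (Nat.succ_pred_eq_of_pos (Finset.card_pos.2 ⟨a, ha⟩)).symm⟩
      rw [hb, Nat.add_sub_cancel, Nat.succ_descFactorial_succ]

lemma Nset_ite (n m : ℕ) (B A : Finset (Fin n)) (hBA : B ⊆ A) :
    (Nset n (m+1) (fun j : Fin (m+1) => if (j:ℕ) = 0 then B else A)).card
      = B.card * (A.card - 1).descFactorial m := by
  rw [Nset_rec]
  simp only [Fin.val_succ, Fin.val_zero, if_pos rfl, Nat.succ_ne_zero, if_false]
  rw [if_pos trivial]
  have : ∀ a ∈ B, (Nset n m (fun _ => A \ {a})).card = (A.card - 1).descFactorial m := by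
    intro a ha
    rw [Nset_const, Finset.sdiff_singleton_eq_erase, Finset.card_erase_of_mem (hBA ha)]
  rw [Finset.sum_congr rfl this, Finset.sum_const, smul_eq_mul]

lemma card_lt_filter (n k : ℕ) (hk : k ≤ n) :
    (univ.filter fun j : Fin n => (j : ℕ) < k).card = k := by
  have : (univ.filter fun j : Fin n => (j : ℕ) < k)
      = Finset.map ⟨Fin.castLE hk, Fin.castLE_injective hk⟩ univ := by
    ext a
    simp only [Finset.mem_filter, Finset.mem_univ, true_and, Finset.mem_map,
      Function.Embedding.coeFn_mk]
    constructor
    · intro h; exact ⟨⟨a, h⟩, rfl⟩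
    · rintro ⟨i, -, rfl⟩; exact i.2
  rw [this, Finset.card_map, Finset.card_univ, Fintype.card_fin]

lemma exists_perm_extend {k n : ℕ} (hk : k ≤ n) (f : Fin k → Fin n)
    (hf : Function.Injective f) :
    ∃ σ : Equiv.Perm (Fin n), ∀ i, σ (Fin.castLE hk i) = f i := by
  classical
  set p : Fin n → Prop := fun a => (a : ℕ) < k with hp
  set q : Fin n → Prop := fun a => ∃ i, f i = a with hq
  let e1 : Subtype p ≃ Fin k :=
    { toFun := fun a => ⟨(a : Fin n), a.2⟩
      invFun := fun i => ⟨Fin.castLE hk i, i.2⟩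
      left_inv := fun a => by ext; rfl
      right_inv := fun i => by ext; rfl }
  let e2 : Fin k ≃ Subtype q :=
    Equiv.ofBijective (fun i => ⟨f i, i, rfl⟩)
      ⟨fun x y hxy => hf (Subtype.ext_iff.1 hxy), by rintro ⟨a, i, rfl⟩; exact ⟨i, rfl⟩⟩
  have cardp : Fintype.card (Subtype p) = k := by
    rw [Fintype.card_congr e1, Fintype.card_fin]
  have cardq : Fintype.card (Subtype q) = k := by
    rw [← Fintype.card_congr e2, Fintype.card_fin]
  have e3 : { a // ¬ p a } ≃ { a // ¬ q a } := by
    apply Fintype.equivOfCardEq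
    rw [Fintype.card_subtype_compl, Fintype.card_subtype_compl, cardp, cardq]
  refine ⟨((Equiv.sumCompl p).symm.trans (((e1.trans e2).sumCongr e3).trans
    (Equiv.sumCompl q))), fun i => ?_⟩
  have hpi : p (Fin.castLE hk i) := i.2
  simp only [Equiv.trans_apply, Equiv.sumCompl_symm_apply_of_pos hpi,
    Equiv.sumCongr_apply, Sum.map_inl, Equiv.sumCompl_apply_inl]
  rfl

lemma card_fix {n k : ℕ} (hk : k ≤ n) :
    (univ.filter fun τ : Equiv.Perm (Fin n) =>
      ∀ i : Fin k, τ (Fin.castLE hk i) = Fin.castLE hk i).card = (n - k).factorial := by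
  classical
  rw [← Fintype.card_subtype]
  set p : Fin n → Prop := fun a => ¬ ((a : ℕ) < k) with hp
  have e : {τ : Equiv.Perm (Fin n) // ∀ i : Fin k, τ (Fin.castLE hk i) = Fin.castLE hk i}
      ≃ {f : Equiv.Perm (Fin n) // ∀ a, ¬ p a → f a = a} :=
    Equiv.subtypeEquiv (Equiv.refl _) (by
      intro τ
      simp only [Equiv.refl_apply, hp, not_not]
      constructor
      · intro h a ha
        have := h ⟨a, ha⟩
        simpa using this
      · intro h i
        exact h (Fin.castLE hk i) i.2)
  rw [Fintype.card_congr e, ← Fintype.card_congr (Equiv.Perm.subtypeEquivSubtypePerm p),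
    Fintype.card_perm]
  congr 1
  show Fintype.card {a : Fin n // ¬ ((a:ℕ) < k)} = n - k
  rw [Fintype.card_subtype_compl, Fintype.card_fin, Fintype.card_subtype, card_lt_filter n k hk]

lemma perm_count {n k : ℕ} (hk : k ≤ n) (A : Fin k → Finset (Fin n)) :
    (univ.filter fun σ : Equiv.Perm (Fin n) =>
        ∀ i : Fin k, σ (Fin.castLE hk i) ∈ A i).card
      = (Nset n k A).card * (n - k).factorial := by
  classical
  rw [Finset.card_eq_sum_card_fiberwise
    (f := fun σ : Equiv.Perm (Fin n) => fun i : Fin k => σ (Fin.castLE hk i))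
    (t := Nset n k A) (fun σ hσ => by
      simp only [Finset.mem_coe, Nset, Finset.mem_filter, Finset.mem_univ, true_and] at hσ ⊢
      exact ⟨fun x y hxy => Fin.castLE_injective hk (σ.injective hxy), hσ⟩)]
  rw [Finset.sum_congr rfl (fun f hf => ?_), Finset.sum_const, smul_eq_mul]
  have hfNs := hf
  simp only [Nset, Finset.mem_filter, Finset.mem_univ, true_and] at hfNs
  obtain ⟨hinj, hmem⟩ := hfNs
  obtain ⟨σ₀, hσ₀⟩ := exists_perm_extend hk f hinj
  have hred : (Finset.filter (fun σ : Equiv.Perm (Fin n) =>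
        ∀ i : Fin k, σ (Fin.castLE hk i) ∈ A i) univ).filter
        (fun σ => (fun i : Fin k => σ (Fin.castLE hk i)) = f)
      = univ.filter fun σ : Equiv.Perm (Fin n) => ∀ i, σ (Fin.castLE hk i) = f i := by
    ext σ
    simp only [Finset.mem_filter, Finset.mem_univ, true_and, _root_.funext_iff]
    constructor
    · rintro ⟨-, h⟩; exact h
    · intro h; exact ⟨fun i => (h i) ▸ hmem i, h⟩
  rw [hred, ← card_fix hk]
  refine Finset.card_nbij' (fun σ => σ₀⁻¹ * σ) (fun τ => σ₀ * τ) ?_ ?_ ?_ ?_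
  · intro σ hσ
    simp only [Finset.mem_coe, Finset.mem_filter, Finset.mem_univ, true_and] at hσ ⊢
    intro i
    rw [Equiv.Perm.mul_apply, hσ i, ← hσ₀ i, ← Equiv.Perm.mul_apply, inv_mul_cancel, Equiv.Perm.one_apply]
  · intro τ hτ
    simp only [Finset.mem_coe, Finset.mem_filter, Finset.mem_univ, true_and] at hτ ⊢
    intro i
    rw [Equiv.Perm.mul_apply, hτ i, hσ₀ i]
  · intro σ _; simp [← mul_assoc]
  · intro τ _; simp [← mul_assoc]

lemma card_perm_inv {n : ℕ} (r : Fin n → Fin n → Prop) [∀ i j, Decidable (r i j)] :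
    (univ.filter fun σ : Equiv.Perm (Fin n) => ∀ i, r i (σ i)).card
    = (univ.filter fun σ : Equiv.Perm (Fin n) => ∀ j, r (σ j) j).card := by
  refine Finset.card_nbij' (·⁻¹) (·⁻¹) ?_ ?_ (by intro σ _; simp) (by intro σ _; simp)
  · intro σ hσ
    simp only [Finset.mem_coe, Finset.mem_filter, Finset.mem_univ, true_and] at *
    intro j
    have := hσ (σ⁻¹ j)
    simpa using this
  · intro σ hσ
    simp only [Finset.mem_coe, Finset.mem_filter, Finset.mem_univ, true_and] at *
    intro i
    have := hσ (σ⁻¹ i)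
    simpa using this

end Helpers

/-- Special cases of the coefficient formula (Example B.3): for a partition `μ` with `n`
parts (zero parts allowed), the coefficient of `u₁^{μ₁}⋯uₙ^{μₙ}` in
`m_{(1^m,0^{n-m})} · h_{|μ|-m}` equals `(n - p₀(μ))^{\underline m}/m!`, and the coefficient
in `m_{(2,1^m,0^{n-m-1})} · h_{|μ|-m-2}` equals
`(n - p₀(μ) - 1)^{\underline m} (n - p₀(μ) - p₁(μ))/m!`. Here `m_λ` is written as
`(1/z_λ)∑_σ ∏ᵢ uᵢ^{λ_{σ(i)}}` and `h_d` as the sum of all monomials of degree `d`,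
and the falling factorial is written as a product. -/
theorem coeff_special_cases (n m : ℕ) (μ : Fin n → ℕ) (hμ : Antitone μ) :
    (m ≤ n → m ≤ ∑ i, μ i →
      MvPolynomial.coeff (Finsupp.equivFunOnFinite.symm μ)
        (MvPolynomial.C
            ((Nat.factorial m * Nat.factorial (n - m) : ℚ))⁻¹ *
          (∑ σ : Equiv.Perm (Fin n), ∏ i : Fin n,
              (MvPolynomial.X i : MvPolynomial (Fin n) ℚ) ^
                (if ((σ i : Fin n) : ℕ) < m then 1 else 0)) *
          ∑ k ∈ Finset.filter (fun k => ∑ i, k i = ∑ i, μ i - m)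
              (Fintype.piFinset fun _ : Fin n => Finset.range (∑ i, μ i - m + 1)),
            ∏ i : Fin n, (MvPolynomial.X i : MvPolynomial (Fin n) ℚ) ^ k i)
      = (∏ t ∈ Finset.range m,
            ((n : ℚ) - ((Finset.univ.filter fun i => μ i = 0).card : ℚ) - (t : ℚ))) /
          Nat.factorial m) ∧
    (m + 1 ≤ n → m + 2 ≤ ∑ i, μ i →
      MvPolynomial.coeff (Finsupp.equivFunOnFinite.symm μ)
        (MvPolynomial.C
            ((Nat.factorial m * Nat.factorial (n - m - 1) : ℚ))⁻¹ *
          (∑ σ : Equiv.Perm (Fin n), ∏ i : Fin n,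
              (MvPolynomial.X i : MvPolynomial (Fin n) ℚ) ^
                (if ((σ i : Fin n) : ℕ) = 0 then 2
                 else if ((σ i : Fin n) : ℕ) < m + 1 then 1 else 0)) *
          ∑ k ∈ Finset.filter (fun k => ∑ i, k i = ∑ i, μ i - m - 2)
              (Fintype.piFinset fun _ : Fin n => Finset.range (∑ i, μ i - m - 2 + 1)),
            ∏ i : Fin n, (MvPolynomial.X i : MvPolynomial (Fin n) ℚ) ^ k i)
      = (∏ t ∈ Finset.range m,
            ((n : ℚ) - ((Finset.univ.filter fun i => μ i = 0).card : ℚ) - 1 - (t : ℚ))) *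
          ((n : ℚ) - ((Finset.univ.filter fun i => μ i = 0).card : ℚ)
            - ((Finset.univ.filter fun i => μ i = 1).card : ℚ)) /
          Nat.factorial m) := by
  classical
  set P0 := (Finset.univ.filter fun i => μ i = 0).card with hP0def
  set P1 := (Finset.univ.filter fun i => μ i = 1).card with hP1def
  set A : Finset (Fin n) := Finset.univ.filter fun i => μ i ≠ 0 with hAdef
  have hP0n : P0 ≤ n := by
    simpa using Finset.card_filter_le Finset.univ (fun i => μ i = 0)
  have hA : A.card = n - P0 := by
    rw [hAdef, Finset.filter_not, Finset.card_sdiff_of_subset (Finset.filter_subset _ _)]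
    simp [hP0def]
  have hfac1 : (Nat.factorial m : ℚ) ≠ 0 := Nat.cast_ne_zero.2 (Nat.factorial_ne_zero m)
  constructor
  · intro hm hsum
    have he1 : ∀ σ : Equiv.Perm (Fin n),
        ∑ i, (if ((σ i : Fin n) : ℕ) < m then 1 else 0) = m := by
      intro σ
      rw [Equiv.sum_comp σ (fun j : Fin n => if (j:ℕ) < m then 1 else 0),
        Finset.sum_boole]
      simp [card_lt_filter n m hm]
    rw [mul_assoc, MvPolynomial.coeff_C_mul,
      coeff_main μ (fun σ i => if ((σ i : Fin n) : ℕ) < m then 1 else 0) m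
        (∑ i, μ i - m) he1 (by omega)]
    have hcount : (Finset.univ.filter fun σ : Equiv.Perm (Fin n) =>
        ∀ i, (if ((σ i : Fin n) : ℕ) < m then 1 else 0) ≤ μ i).card
        = (n - P0).descFactorial m * (n - m).factorial := by
      have step1 : (Finset.univ.filter fun σ : Equiv.Perm (Fin n) =>
          ∀ i, (if ((σ i : Fin n) : ℕ) < m then 1 else 0) ≤ μ i)
          = Finset.univ.filter fun σ : Equiv.Perm (Fin n) =>
            ∀ i, (((σ i : Fin n) : ℕ) < m → μ i ≠ 0) := by
        refine Finset.filter_congr fun σ _ => ?_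
        refine forall_congr' fun i => ?_
        by_cases hc : ((σ i : Fin n) : ℕ) < m
        · rw [if_pos hc]
          exact ⟨fun h _ => by omega, fun h => by have := h hc; omega⟩
        · rw [if_neg hc]
          exact ⟨fun _ hlt => absurd hlt hc, fun _ => Nat.zero_le _⟩
      rw [step1, card_perm_inv (fun i j => ((j : ℕ) < m → μ i ≠ 0))]
      have step2 : (Finset.univ.filter fun σ : Equiv.Perm (Fin n) =>
          ∀ j, ((j : Fin n) : ℕ) < m → μ (σ j) ≠ 0)
          = Finset.univ.filter fun σ : Equiv.Perm (Fin n) =>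
            ∀ i : Fin m, σ (Fin.castLE hm i) ∈ (fun _ : Fin m => A) i := by
        refine Finset.filter_congr fun σ _ => ?_
        constructor
        · intro h i
          simp only [hAdef, Finset.mem_filter, Finset.mem_univ, true_and]
          exact h (Fin.castLE hm i) (by simpa using i.2)
        · intro h j hj
          have := h ⟨(j : ℕ), hj⟩
          simp only [hAdef, Finset.mem_filter, Finset.mem_univ, true_and] at this
          have hj' : Fin.castLE hm ⟨(j : ℕ), hj⟩ = j := by ext; rfl
          rwa [hj'] at this
      rw [step2, perm_count hm (fun _ => A), Nset_const, hA]
    rw [hcount]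
    have hfac2 : (Nat.factorial (n - m) : ℚ) ≠ 0 :=
      Nat.cast_ne_zero.2 (Nat.factorial_ne_zero _)
    have hprod : (∏ t ∈ Finset.range m, ((n : ℚ) - (P0 : ℚ) - (t : ℚ)))
        = ((n - P0).descFactorial m : ℚ) := by
      rw [← descCast]
      exact Finset.prod_congr rfl fun t _ => by rw [Nat.cast_sub hP0n]
    rw [hprod]
    push_cast
    field_simp
  · intro hm hsum
    set B : Finset (Fin n) := Finset.univ.filter fun i => 2 ≤ μ i with hBdef
    have hBA : B ⊆ A := fun i hi => by
      simp only [hBdef, hAdef, Finset.mem_filter, Finset.mem_univ, true_and] at *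
      omega
    have hP1n : P0 + P1 ≤ n := by
      have hdisj : Disjoint (Finset.univ.filter fun i => μ i = 0)
          (Finset.univ.filter fun i => μ i = 1) :=
        Finset.disjoint_left.2 fun i hi hj => by
          simp only [Finset.mem_filter] at hi hj; omega
      calc P0 + P1 = ((Finset.univ.filter fun i => μ i = 0)
            ∪ (Finset.univ.filter fun i => μ i = 1)).card :=
            (Finset.card_union_of_disjoint hdisj).symm
        _ ≤ Fintype.card (Fin n) := Finset.card_le_univ _
        _ = n := Fintype.card_fin n
    have hP01 : P0 + 1 ≤ n := by
      have hex : ∃ i, μ i ≠ 0 := by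
        by_contra hcon
        push_neg at hcon
        have : ∑ i, μ i = 0 := Finset.sum_eq_zero fun i _ => hcon i
        omega
      obtain ⟨i, hi⟩ := hex
      have : 1 ≤ A.card := Finset.card_pos.2 ⟨i, by simp [hAdef, hi]⟩
      omega
    have hB : B.card = n - P0 - P1 := by
      have : B = A \ (Finset.univ.filter fun i => μ i = 1) := by
        ext i
        simp only [hBdef, hAdef, Finset.mem_sdiff, Finset.mem_filter, Finset.mem_univ,
          true_and]
        omega
      rw [this, Finset.card_sdiff_of_subset (fun i hi => by
        simp only [hAdef, Finset.mem_filter, Finset.mem_univ, true_and] at *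
        omega), hA]
    have he2 : ∀ σ : Equiv.Perm (Fin n),
        ∑ i, (if ((σ i : Fin n) : ℕ) = 0 then 2
          else if ((σ i : Fin n) : ℕ) < m + 1 then 1 else 0) = m + 2 := by
      intro σ
      rw [Equiv.sum_comp σ (fun j : Fin n =>
        if (j:ℕ) = 0 then 2 else if (j:ℕ) < m + 1 then 1 else 0)]
      have split : ∀ j : Fin n, (if (j:ℕ) = 0 then 2 else if (j:ℕ) < m + 1 then 1 else 0)
          = (if (j:ℕ) < m + 1 then 1 else 0) + (if (j:ℕ) < 1 then 1 else 0) := by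
        intro j; split_ifs <;> omega
      rw [Finset.sum_congr rfl fun j _ => split j, Finset.sum_add_distrib,
        Finset.sum_boole, Finset.sum_boole, card_lt_filter n (m+1) hm,
        card_lt_filter n 1 (by omega)]
      simp
    rw [mul_assoc, MvPolynomial.coeff_C_mul,
      coeff_main μ (fun σ i => if ((σ i : Fin n) : ℕ) = 0 then 2
        else if ((σ i : Fin n) : ℕ) < m + 1 then 1 else 0) (m + 2)
        (∑ i, μ i - m - 2) he2 (by omega)]
    have hcount : (Finset.univ.filter fun σ : Equiv.Perm (Fin n) =>
        ∀ i, (if ((σ i : Fin n) : ℕ) = 0 then 2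
          else if ((σ i : Fin n) : ℕ) < m + 1 then 1 else 0) ≤ μ i).card
        = (n - P0 - P1) * (n - P0 - 1).descFactorial m * (n - (m + 1)).factorial := by
      have step1 : (Finset.univ.filter fun σ : Equiv.Perm (Fin n) =>
          ∀ i, (if ((σ i : Fin n) : ℕ) = 0 then 2
            else if ((σ i : Fin n) : ℕ) < m + 1 then 1 else 0) ≤ μ i)
          = Finset.univ.filter fun σ : Equiv.Perm (Fin n) =>
            ∀ i, ((((σ i : Fin n) : ℕ) = 0 → 2 ≤ μ i) ∧
              (((σ i : Fin n) : ℕ) ≠ 0 → ((σ i : Fin n) : ℕ) < m + 1 → μ i ≠ 0)) := by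
        refine Finset.filter_congr fun σ _ => ?_
        refine forall_congr' fun i => ?_
        constructor
        · intro h
          split_ifs at h with h1 h2
          · exact ⟨fun _ => h, fun hne _ => absurd h1 hne⟩
          · exact ⟨fun h0 => absurd h0 h1, fun _ _ => by omega⟩
          · exact ⟨fun h0 => absurd h0 h1, fun _ h2' => absurd h2' h2⟩
        · intro h
          obtain ⟨ha, hb⟩ := h
          split_ifs with h1 h2
          · exact ha h1
          · have := hb h1 h2; omega
          · exact Nat.zero_le _
      rw [step1, card_perm_inv (fun i j =>
        (((j : ℕ) = 0 → 2 ≤ μ i) ∧ ((j : ℕ) ≠ 0 → (j : ℕ) < m + 1 → μ i ≠ 0)))]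
      have step2 : (Finset.univ.filter fun σ : Equiv.Perm (Fin n) =>
          ∀ j : Fin n, (((j : ℕ) = 0 → 2 ≤ μ (σ j)) ∧
            ((j : ℕ) ≠ 0 → (j : ℕ) < m + 1 → μ (σ j) ≠ 0)))
          = Finset.univ.filter fun σ : Equiv.Perm (Fin n) =>
            ∀ i : Fin (m+1), σ (Fin.castLE hm i) ∈
              (fun j : Fin (m+1) => if (j:ℕ) = 0 then B else A) i := by
        refine Finset.filter_congr fun σ _ => ?_
        constructor
        · intro h i
          show σ (Fin.castLE hm i) ∈ (if (i:ℕ) = 0 then B else A)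
          by_cases h0 : (i : ℕ) = 0
          · rw [if_pos h0]
            simp only [hBdef, Finset.mem_filter, Finset.mem_univ, true_and]
            exact (h (Fin.castLE hm i)).1 (by simpa using h0)
          · rw [if_neg h0]
            simp only [hAdef, Finset.mem_filter, Finset.mem_univ, true_and]
            exact (h (Fin.castLE hm i)).2 (by simpa using h0) (by simpa using i.2)
        · intro h j
          constructor
          · intro hj0
            have this : σ (Fin.castLE hm ⟨0, Nat.succ_pos m⟩) ∈
                (if ((⟨0, Nat.succ_pos m⟩ : Fin (m+1)) : ℕ) = 0 then B else A) :=
              h ⟨0, Nat.succ_pos m⟩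
            rw [if_pos rfl] at this
            simp only [hBdef, Finset.mem_filter, Finset.mem_univ, true_and] at this
            have hj' : Fin.castLE hm ⟨0, Nat.succ_pos m⟩ = j := by
              ext; simpa using hj0.symm
            rwa [hj'] at this
          · intro hne hlt
            have this : σ (Fin.castLE hm ⟨(j : ℕ), hlt⟩) ∈
                (if ((⟨(j : ℕ), hlt⟩ : Fin (m+1)) : ℕ) = 0 then B else A) :=
              h ⟨(j : ℕ), hlt⟩
            rw [if_neg (by simpa using hne)] at this
            simp only [hAdef, Finset.mem_filter, Finset.mem_univ, true_and] at this
            have hj' : Fin.castLE hm ⟨(j : ℕ), hlt⟩ = j := by ext; rfl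
            rwa [hj'] at this
      rw [step2, perm_count hm (fun j : Fin (m+1) => if (j:ℕ) = 0 then B else A),
        Nset_ite n m B A hBA, hB, hA]
    rw [hcount]
    have hfac2 : (Nat.factorial (n - m - 1) : ℚ) ≠ 0 :=
      Nat.cast_ne_zero.2 (Nat.factorial_ne_zero _)
    have hprod : (∏ t ∈ Finset.range m, ((n : ℚ) - (P0 : ℚ) - 1 - (t : ℚ)))
        = ((n - P0 - 1).descFactorial m : ℚ) := by
      rw [← descCast]
      refine Finset.prod_congr rfl fun t _ => ?_
      rw [Nat.sub_sub, Nat.cast_sub (by omega : P0 + 1 ≤ n)]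
      push_cast
      ring
    rw [hprod]
    have hsub : n - (m + 1) = n - m - 1 := (Nat.sub_sub n m 1).symm
    rw [hsub]
    have hcast2 : ((n - P0 - P1 : ℕ) : ℚ) = (n : ℚ) - P0 - P1 := by
      rw [Nat.sub_sub, Nat.cast_sub (by omega : P0 + P1 ≤ n)]
      push_cast
      ring
    push_cast [hcast2]
    field_simp
end
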